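/- arXiv:2507.15341 — 5 statements merged into one kernel-verified Lean document; each statement's English description precedes it below -/
import Mathlib

section
/- Every Kan complex is a Skvortsov–Shehtman complex; that is, if a simplicial set S satisfies the Kan condition Kan_p[n] for all n>0 and 0 ≤ p ≤ n, then S satisfies the Beck–Chevalley condition BC_{p,q}[n] for all n>1 and 0 ≤ p < q ≤ n. -/
open CategoryTheory Simplicial

/-- The Kan condition `Kan_p[1]` in dimension 1. -/
def KanCondition1 (S : SSet) (p : Fin 2) : Prop :=
  ∀ c : (i : Fin 2) → i ≠ p → S _⦋0⦌,
    ∃ x : S _⦋1⦌, ∀ (i : Fin 2) (hi : i ≠ p), S.δ i x = c i hi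

/-- The Kan condition `Kan_p[k+2]` in dimensions `≥ 2`. -/
def KanCondition (S : SSet) (k : ℕ) (p : Fin (k + 3)) : Prop :=
  ∀ c : (i : Fin (k + 3)) → i ≠ p → S _⦋k + 1⦌,
    (∀ (i j : Fin (k + 3)) (hij : i < j) (hi : i ≠ p) (hj : j ≠ p),
      S.δ (⟨i.1, by have h1 : i.1 < j.1 := hij; have h2 := j.isLt; omega⟩ : Fin (k + 2)) (c j hj) =
      S.δ (⟨j.1 - 1, by have h2 := j.isLt; omega⟩ : Fin (k + 2)) (c i hi)) →
    ∃ x : S _⦋k + 2⦌, ∀ (i : Fin (k + 3)) (hi : i ≠ p), S.δ i x = c i hi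

/-- The Beck–Chevalley condition `BC_{p,q}[k+2]`. -/
def BCCondition (S : SSet) (k : ℕ) (p q : Fin (k + 3)) (hpq : p < q) : Prop :=
  ∀ cp cq : S _⦋k + 1⦌,
    S.δ (⟨p.1, by have h1 : p.1 < q.1 := hpq; have h2 := q.isLt; omega⟩ : Fin (k + 2)) cq =
    S.δ (⟨q.1 - 1, by have h2 := q.isLt; omega⟩ : Fin (k + 2)) cp →
    ∃ x : S _⦋k + 2⦌, S.δ p x = cp ∧ S.δ q x = cq



open Finset

section helpers
/-- `ι` : complement embedding skipping `r`. -/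
def iotaF {m : ℕ} (r : Fin (m + 1)) (b : Fin m) : Fin (m + 1) :=
  if b.1 < r.1 then ⟨b.1, by have := b.isLt; omega⟩ else ⟨b.1 + 1, by have := b.isLt; omega⟩

def gG {m : ℕ} (r : Fin (m + 1)) (b : Fin m) : Fin m :=
  if h : b.1 < r.1 then ⟨r.1 - 1, by have := b.isLt; have := r.isLt; omega⟩
  else ⟨r.1, by have := b.isLt; omega⟩

lemma iotaF_lt {m : ℕ} (r : Fin (m + 1)) (b : Fin m) (h : b.1 < r.1) :
    iotaF r b = ⟨b.1, by have := b.isLt; omega⟩ := by unfold iotaF; rw [if_pos h]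

lemma iotaF_ge {m : ℕ} (r : Fin (m + 1)) (b : Fin m) (h : ¬ b.1 < r.1) :
    iotaF r b = ⟨b.1 + 1, by have := b.isLt; omega⟩ := by unfold iotaF; rw [if_neg h]

lemma gG_lt {m : ℕ} (r : Fin (m + 1)) (b : Fin m) (h : b.1 < r.1) :
    gG r b = ⟨r.1 - 1, by have := b.isLt; have := r.isLt; omega⟩ := by unfold gG; rw [dif_pos h]

lemma gG_ge {m : ℕ} (r : Fin (m + 1)) (b : Fin m) (h : ¬ b.1 < r.1) :
    gG r b = ⟨r.1, by have := b.isLt; omega⟩ := by unfold gG; rw [dif_neg h]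
end helpers

lemma ddd (S : SSet) (n a b : ℕ) (hab : a ≤ b) (hb : b + 1 < n + 3) (x : S _⦋n+2⦌) :
    S.δ (⟨a, by omega⟩ : Fin (n+2)) (S.δ (⟨b+1, hb⟩ : Fin (n+3)) x)
      = S.δ (⟨b, by omega⟩ : Fin (n+2)) (S.δ (⟨a, by omega⟩ : Fin (n+3)) x) := by
  have h := ConcreteCategory.congr_hom (S.δ_comp_δ (n := n) (i := ⟨a, by omega⟩) (j := ⟨b, by omega⟩) (by exact hab)) x
  simp only [types_comp_apply] at h
  convert h using 3 <;> rfl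

/-- Generalized horn filling condition at level `K+2`. -/
def FillCond (S : SSet) (K : ℕ) : Prop :=
  ∀ (A : Finset (Fin (K + 3))) (c : Fin (K + 3) → S _⦋K + 1⦌), A.Nonempty → A ≠ Finset.univ →
    (∀ (i j : Fin (K + 3)) (hij : i < j), i ∈ A → j ∈ A →
      S.δ (⟨i.1, by have h1 : i.1 < j.1 := hij; have := j.isLt; omega⟩ : Fin (K + 2)) (c j) =
      S.δ (⟨j.1 - 1, by have := j.isLt; omega⟩ : Fin (K + 2)) (c i)) →
    ∃ x : S _⦋K + 2⦌, ∀ i ∈ A, S.δ i x = c i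

/-- The key lower-dimensional filling ability. -/
def Hlow (S : SSet) (K : ℕ) : Prop :=
  ∀ (A : Finset (Fin (K + 3))) (r : Fin (K + 3)) (c : Fin (K + 3) → S _⦋K + 1⦌),
    r ∉ A → A.Nonempty → (∃ s, s ∉ A ∧ s ≠ r) →
    (∀ (i j : Fin (K + 3)) (hij : i < j), i ∈ A → j ∈ A →
      S.δ (⟨i.1, by have h1 : i.1 < j.1 := hij; have := j.isLt; omega⟩ : Fin (K + 2)) (c j) =
      S.δ (⟨j.1 - 1, by have := j.isLt; omega⟩ : Fin (K + 2)) (c i)) →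
    ∃ y : S _⦋K + 1⦌,
      (∀ i ∈ A, ∀ h : i.1 < r.1,
        S.δ (⟨i.1, by have := r.isLt; omega⟩ : Fin (K + 2)) y =
        S.δ (⟨r.1 - 1, by have := r.isLt; omega⟩ : Fin (K + 2)) (c i)) ∧
      (∀ i ∈ A, ∀ h : r.1 < i.1,
        S.δ (⟨i.1 - 1, by have := i.isLt; omega⟩ : Fin (K + 2)) y =
        S.δ (⟨r.1, by have := i.isLt; omega⟩ : Fin (K + 2)) (c i))

lemma ddd' (S : SSet) (n a cc : ℕ) (h : a < cc) (hcc : cc < n + 3) (x : S _⦋n+2⦌) :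
    S.δ (⟨a, by omega⟩ : Fin (n+2)) (S.δ (⟨cc, hcc⟩ : Fin (n+3)) x)
      = S.δ (⟨cc - 1, by omega⟩ : Fin (n+2)) (S.δ (⟨a, by omega⟩ : Fin (n+3)) x) := by
  obtain ⟨b, rfl⟩ : ∃ b, cc = b + 1 := ⟨cc - 1, by omega⟩
  exact ddd S n a b (by omega) hcc x

lemma hlow_zero (S : SSet) (h1 : ∀ p : Fin 2, KanCondition1 S p) : Hlow S 0 := by
  intro A r c hrA hne hex hc
  obtain ⟨s, hsA, hsr⟩ := hex
  obtain ⟨i0, hi0⟩ := hne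
  have hval : ∀ i ∈ A, i.1 ≠ r.1 ∧ i.1 ≠ s.1 := by
    intro i hi
    constructor
    · intro h; exact hrA (Fin.ext h ▸ hi)
    · intro h; exact hsA (Fin.ext h ▸ hi)
  have hsrv : s.1 ≠ r.1 := fun h => hsr (Fin.ext h)
  have huniq : ∀ i ∈ A, i = i0 := by
    intro i hi
    obtain ⟨h1', h2'⟩ := hval i hi
    obtain ⟨h3', h4'⟩ := hval i0 hi0
    apply Fin.ext
    have := i.isLt; have := i0.isLt; have := r.isLt; have := s.isLt
    omega
  obtain ⟨hir, _⟩ := hval i0 hi0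
  by_cases hlt : i0.1 < r.1
  · have hrpos : (0:ℕ) < r.1 := by omega
    obtain ⟨x, hx⟩ := h1 ⟨1 - i0.1, by omega⟩
      (fun _ _ => S.δ (⟨r.1 - 1, by have := r.isLt; omega⟩ : Fin 2) (c i0))
    refine ⟨x, ?_, ?_⟩
    · intro i hi h
      have hii0 := huniq i hi
      subst hii0
      exact hx ⟨i.1, by have := r.isLt; omega⟩
        (by intro hcon; have := congrArg Fin.val hcon; simp at this; omega)
    · intro i hi h
      have hii0 := huniq i hi
      subst hii0
      omega
  · have hgt : r.1 < i0.1 := by omega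
    obtain ⟨x, hx⟩ := h1 ⟨1 - (i0.1 - 1), by omega⟩
      (fun _ _ => S.δ (⟨r.1, by have := i0.isLt; omega⟩ : Fin 2) (c i0))
    refine ⟨x, ?_, ?_⟩
    · intro i hi h
      have hii0 := huniq i hi
      subst hii0
      omega
    · intro i hi h
      have hii0 := huniq i hi
      subst hii0
      exact hx ⟨i.1 - 1, by have := i.isLt; omega⟩
        (by intro hcon; have := congrArg Fin.val hcon; simp at this; have := i.isLt; omega)

lemma hlow_succ (S : SSet) (K : ℕ) (hfill : FillCond S K) : Hlow S (K + 1) := by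
  intro A r c hrA hne hex hc
  obtain ⟨s, hsA, hsr⟩ := hex
  classical
  set B : Finset (Fin (K + 3)) := Finset.univ.filter (fun b => iotaF r b ∈ A) with hBdef
  have hmemB : ∀ b, b ∈ B ↔ iotaF r b ∈ A := by
    intro b; simp [hBdef]
  -- B is nonempty
  obtain ⟨i0, hi0⟩ := hne
  have hi0r : i0.1 ≠ r.1 := fun h => hrA (Fin.ext h ▸ hi0)
  have hsrv : s.1 ≠ r.1 := fun h => hsr (Fin.ext h)
  have hsec : ∀ i : Fin (K + 4), i.1 ≠ r.1 → ∃ b : Fin (K + 3), iotaF r b = i := by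
    intro i hir
    by_cases hlt : i.1 < r.1
    · exact ⟨⟨i.1, by have := r.isLt; omega⟩, by rw [iotaF_lt r _ hlt]⟩
    · refine ⟨⟨i.1 - 1, by have := i.isLt; omega⟩, ?_⟩
      rw [iotaF_ge r _ (by simp; omega)]
      exact Fin.ext (by simp; omega)
  obtain ⟨b0, hb0⟩ := hsec i0 hi0r
  have hBne : B.Nonempty := ⟨b0, (hmemB b0).mpr (hb0 ▸ hi0)⟩
  obtain ⟨bs, hbs⟩ := hsec s hsrv
  have hBnu : B ≠ Finset.univ := by
    intro h
    exact hsA (hbs ▸ (hmemB bs).mp (h ▸ Finset.mem_univ bs))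
  -- the prescribed faces
  have hcomp : ∀ (b b' : Fin (K + 3)) (hbb : b < b'), b ∈ B → b' ∈ B →
      S.δ (⟨b.1, by have h1 : b.1 < b'.1 := hbb; have := b'.isLt; omega⟩ : Fin (K + 2))
        (S.δ (gG r b') (c (iotaF r b'))) =
      S.δ (⟨b'.1 - 1, by have := b'.isLt; omega⟩ : Fin (K + 2))
        (S.δ (gG r b) (c (iotaF r b))) := by
    intro b b' hbb hbB hb'B
    have hbb' : b.1 < b'.1 := hbb
    have hiA : iotaF r b ∈ A := (hmemB b).mp hbB
    have hjA : iotaF r b' ∈ A := (hmemB b').mp hb'B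
    have hbK := b.isLt; have hb'K := b'.isLt; have hrK := r.isLt
    by_cases h2 : b'.1 < r.1
    · -- case C3 : b < b' < r
      have h1 : b.1 < r.1 := by omega
      rw [iotaF_lt r b h1] at hiA; rw [iotaF_lt r b' h2] at hjA
      rw [iotaF_lt r b h1, iotaF_lt r b' h2, gG_lt r b h1, gG_lt r b' h2]
      have hcij := hc ⟨b.1, by omega⟩ ⟨b'.1, by omega⟩ (by exact hbb') hiA hjA
      have sA := ddd' S K b.1 (r.1 - 1) (by omega) (by omega) (c ⟨b'.1, by omega⟩)
      have sB := congrArg (S.δ (⟨r.1 - 1 - 1, by omega⟩ : Fin (K + 2))) hcij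
      have sC := (ddd' S K (b'.1 - 1) (r.1 - 1) (by omega) (by omega) (c ⟨b.1, by omega⟩)).symm
      exact (sA.trans sB).trans sC
    · by_cases h1 : b.1 < r.1
      · -- case C2 : b < r ≤ b'
        rw [iotaF_lt r b h1] at hiA; rw [iotaF_ge r b' h2] at hjA
        rw [iotaF_lt r b h1, iotaF_ge r b' h2, gG_lt r b h1, gG_ge r b' h2]
        have hcij := hc ⟨b.1, by omega⟩ ⟨b'.1 + 1, by omega⟩ (Fin.mk_lt_mk.mpr (by omega)) hiA hjA
        have sA := ddd' S K b.1 r.1 (by omega) (by omega) (c ⟨b'.1 + 1, by omega⟩)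
        have sB := congrArg (S.δ (⟨r.1 - 1, by omega⟩ : Fin (K + 2))) hcij
        have sC := ddd' S K (r.1 - 1) b'.1 (by omega) (by omega) (c ⟨b.1, by omega⟩)
        exact (sA.trans sB).trans sC
      · -- case C1 : r ≤ b < b'
        rw [iotaF_ge r b h1] at hiA; rw [iotaF_ge r b' h2] at hjA
        rw [iotaF_ge r b h1, iotaF_ge r b' h2, gG_ge r b h1, gG_ge r b' h2]
        have hcij := hc ⟨b.1 + 1, by omega⟩ ⟨b'.1 + 1, by omega⟩ (Fin.mk_lt_mk.mpr (by omega))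
          hiA hjA
        have sA := (ddd' S K r.1 (b.1 + 1) (by omega) (by omega) (c ⟨b'.1 + 1, by omega⟩)).symm
        have sB := congrArg (S.δ (⟨r.1, by omega⟩ : Fin (K + 2))) hcij
        have sC := ddd' S K r.1 b'.1 (by omega) (by omega) (c ⟨b.1 + 1, by omega⟩)
        exact (sA.trans sB).trans sC
  obtain ⟨y, hy⟩ := hfill B (fun b => S.δ (gG r b) (c (iotaF r b))) hBne hBnu hcomp
  refine ⟨y, ?_, ?_⟩
  · intro i hi h
    set b : Fin (K + 3) := ⟨i.1, by have := r.isLt; omega⟩ with hb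
    have hιb : iotaF r b = i := by rw [iotaF_lt r b h]
    have hbB : b ∈ B := (hmemB b).mpr (hιb ▸ hi)
    have hthis : S.δ b y = S.δ (gG r b) (c (iotaF r b)) := hy b hbB
    rw [gG_lt r b h, hιb] at hthis
    exact hthis
  · intro i hi h
    set b : Fin (K + 3) := ⟨i.1 - 1, by have := i.isLt; omega⟩ with hb
    have hge : ¬ b.1 < r.1 := by simp [hb]; omega
    have hιb : iotaF r b = i := by
      rw [iotaF_ge r b hge]; exact Fin.ext (by simp [hb]; omega)
    have hbB : b ∈ B := (hmemB b).mpr (hιb ▸ hi)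
    have hthis : S.δ b y = S.δ (gG r b) (c (iotaF r b)) := hy b hbB
    rw [gG_ge r b hge, hιb] at hthis
    exact hthis

lemma step (S : SSet) (K : ℕ) (hkan : ∀ p : Fin (K + 3), KanCondition S K p)
    (hlow : Hlow S K) : FillCond S K := by
  suffices h : ∀ d (A : Finset (Fin (K + 3))) (c : Fin (K + 3) → S _⦋K + 1⦌),
      (univ \ A).card ≤ d + 1 → A.Nonempty → A ≠ univ →
      (∀ (i j : Fin (K + 3)) (hij : i < j), i ∈ A → j ∈ A →
        S.δ (⟨i.1, by have h1 : i.1 < j.1 := hij; have := j.isLt; omega⟩ : Fin (K + 2)) (c j) =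
        S.δ (⟨j.1 - 1, by have := j.isLt; omega⟩ : Fin (K + 2)) (c i)) →
      ∃ x : S _⦋K + 2⦌, ∀ i ∈ A, S.δ i x = c i by
    intro A c hne hnu hc
    exact h (K + 3) A c (le_trans (card_le_card (sdiff_subset)) (by simp)) hne hnu hc
  intro d
  induction d with
  | zero =>
    intro A c hcard hne hnu hc
    -- complement is a single point p
    have h1c : (univ \ A).card = 1 := by
      have hpos : 0 < (univ \ A).card := card_pos.mpr
        (by rw [sdiff_nonempty]; intro hsub; exact hnu (univ_subset_iff.mp hsub))
      omega
    obtain ⟨p, hp⟩ := card_eq_one.mp h1c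
    have hmem : ∀ i, i ≠ p → i ∈ A := by
      intro i hip
      by_contra hia
      have : i ∈ univ \ A := by simp [hia]
      rw [hp] at this; simp at this; exact hip this
    have hpA : p ∉ A := by
      have : p ∈ univ \ A := by rw [hp]; simp
      simp at this; exact this
    obtain ⟨x, hx⟩ := hkan p (fun i _ => c i) (fun i j hij hi hj => hc i j hij (hmem i hi) (hmem j hj))
    exact ⟨x, fun i hi => hx i (fun h => hpA (h ▸ hi))⟩
  | succ d ih =>
    intro A c hcard hne hnu hc
    by_cases hle : (univ \ A).card ≤ d + 1
    · exact ih A c hle hne hnu hc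
    · have h2c : 2 ≤ (univ \ A).card := by omega
      obtain ⟨r, hr, s, hs, hrs⟩ := one_lt_card.mp h2c
      have hrA : r ∉ A := (mem_sdiff.mp hr).2
      have hsA : s ∉ A := (mem_sdiff.mp hs).2
      obtain ⟨y, hy1, hy2⟩ := hlow A r c hrA hne ⟨s, hsA, fun h => hrs h.symm⟩ hc
      set c' : Fin (K + 3) → S _⦋K + 1⦌ := fun i => if i = r then y else c i with hc'
      have hcc' : ∀ i ∈ A, c' i = c i := fun i hi => if_neg (fun h => hrA (by rw [← h]; exact hi))
      have hcr : c' r = y := if_pos rfl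
      have compat' : ∀ (i j : Fin (K + 3)) (hij : i < j), i ∈ insert r A → j ∈ insert r A →
          S.δ (⟨i.1, by have h1 : i.1 < j.1 := hij; have := j.isLt; omega⟩ : Fin (K + 2)) (c' j) =
          S.δ (⟨j.1 - 1, by have := j.isLt; omega⟩ : Fin (K + 2)) (c' i) := by
        intro i j hij hi hj
        by_cases hir : i = r
        · have hjr : j ≠ r := by intro h; rw [hir, h] at hij; exact lt_irrefl _ hij
          have hjA : j ∈ A := (mem_insert.mp hj).resolve_left hjr
          rw [hcc' j hjA]
          subst hir
          rw [hcr]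
          exact (hy2 j hjA hij).symm
        · have hiA : i ∈ A := (mem_insert.mp hi).resolve_left hir
          by_cases hjr : j = r
          · rw [hcc' i hiA]
            subst hjr
            rw [hcr]
            exact hy1 i hiA hij
          · have hjA : j ∈ A := (mem_insert.mp hj).resolve_left hjr
            rw [hcc' i hiA, hcc' j hjA]
            exact hc i j hij hiA hjA
      have hcard' : (univ \ insert r A).card ≤ d + 1 := by
        have : univ \ insert r A = (univ \ A).erase r := by
          ext t; simp [mem_sdiff, mem_erase, and_comm]
        rw [this, card_erase_of_mem hr]
        omega
      have hnins : insert r A ≠ univ := by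
        intro h
        have hsmem : s ∈ insert r A := h ▸ mem_univ s
        rcases mem_insert.mp hsmem with h' | h'
        · exact hrs h'.symm
        · exact hsA h'
      obtain ⟨x, hx⟩ := ih (insert r A) c' hcard' ⟨r, mem_insert_self r A⟩ hnins compat'
      exact ⟨x, fun i hi => by rw [← hcc' i hi]; exact hx i (mem_insert_of_mem hi)⟩

lemma fillAll (S : SSet) (h1 : ∀ p : Fin 2, KanCondition1 S p)
    (h2 : ∀ (k : ℕ) (p : Fin (k + 3)), KanCondition S k p) : ∀ K, FillCond S K := by
  intro K
  induction K with
  | zero => exact step S 0 (h2 0) (hlow_zero S h1)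
  | succ K ih => exact step S (K + 1) (h2 (K + 1)) (hlow_succ S K ih)

/-- Every Kan complex is a Skvortsov-Shehtman complex: if a simplicial set `S` satisfies the
Kan condition `Kan_p[n]` for all `n > 0` and `0 <= p <= n`, then `S` satisfies the
Beck-Chevalley condition `BC_{p,q}[n]` for all `n > 1` and `0 <= p < q <= n`. -/
theorem kanComplex_isSSComplex (S : SSet)
    (h1 : ∀ p : Fin 2, KanCondition1 S p)
    (h2 : ∀ (k : ℕ) (p : Fin (k + 3)), KanCondition S k p) :
    ∀ (k : ℕ) (p q : Fin (k + 3)) (hpq : p < q), BCCondition S k p q hpq := by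
  intro k p q hpq cp cq hglue
  have hqp : q ≠ p := (ne_of_lt hpq).symm
  have hAne : ({p, q} : Finset (Fin (k + 3))).Nonempty := ⟨p, by simp⟩
  have hAnu : ({p, q} : Finset (Fin (k + 3))) ≠ Finset.univ := by
    intro h
    have hle : (Finset.univ : Finset (Fin (k + 3))).card ≤ 2 := by
      rw [← h]
      exact (Finset.card_insert_le p {q}).trans (by simp)
    simp [Finset.card_univ] at hle
  have hcompat : ∀ (i j : Fin (k + 3)) (hij : i < j), i ∈ ({p, q} : Finset (Fin (k + 3))) →
      j ∈ ({p, q} : Finset (Fin (k + 3))) →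
      S.δ (⟨i.1, by have h1' : i.1 < j.1 := hij; have := j.isLt; omega⟩ : Fin (k + 2))
        (if j = p then cp else cq) =
      S.δ (⟨j.1 - 1, by have := j.isLt; omega⟩ : Fin (k + 2)) (if i = p then cp else cq) := by
    intro i j hij hi hj
    simp only [Finset.mem_insert, Finset.mem_singleton] at hi hj
    rcases hi with hi | hi
    · rcases hj with hj | hj
      · subst hi; subst hj; exact absurd hij (lt_irrefl _)
      · subst hi; subst hj
        rw [if_neg hqp, if_pos rfl]
        exact hglue
    · rcases hj with hj | hj
      · subst hi; subst hj; exact absurd (hij.trans hpq) (lt_irrefl _)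
      · subst hi; subst hj; exact absurd hij (lt_irrefl _)
  obtain ⟨x, hx⟩ := fillAll S h1 h2 k {p, q} (fun i => if i = p then cp else cq)
    hAne hAnu hcompat
  refine ⟨x, ?_, ?_⟩
  · have := hx p (by simp)
    rwa [if_pos rfl] at this
  · have := hx q (by simp)
    rwa [if_neg hqp] at this
end

section
/- Every Kan fibration of simplicial sets is a Skvortsov–Shehtman fibration: if f : E → B is a Kan fibration, then for all n>1 and 0 ≤ p < q ≤ n, every commutative square with left vertical map the inclusion of the rhombus Λ_{p,q}[n] into Δ[n] and right vertical map f admits a diagonal filler Δ[n] → E making both triangles commute. -/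
open CategoryTheory Simplicial

namespace SSet

/-- The `p,q`-th rhombus `Λ_{p,q}[n] ⊆ Δ[n]`: the union of the `p`-th and the `q`-th face of the
standard `n`-simplex. A simplex of `Δ[n]` belongs to it iff its image misses `p` or misses `q`. -/
def rhombus (n : ℕ) (p q : Fin (n + 1)) : SSet where
  obj m := { α : Δ[n].obj m //
    p ∉ Set.range (stdSimplex.asOrderHom α) ∨ q ∉ Set.range (stdSimplex.asOrderHom α) }
  map {m₁ m₂} f := TypeCat.ofHom fun α =>
    ⟨Δ[n].map f α.1, by
      rcases α.property with h | h
      · exact Or.inl (fun hc => h (Set.range_comp_subset_range _ _ hc))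
      · exact Or.inr (fun hc => h (Set.range_comp_subset_range _ _ hc))⟩

/-- The inclusion of the rhombus `Λ_{p,q}[n]` into the standard simplex `Δ[n]`. -/
def rhombusInclusion (n : ℕ) (p q : Fin (n + 1)) : rhombus n p q ⟶ Δ[n] where
  app m := TypeCat.ofHom fun (α : { α : Δ[n].obj m // _ }) => α

end SSet


open CategoryTheory Simplicial

/-- A map of simplicial sets is a Kan fibration if it has the right lifting property with
respect to all horn inclusions. -/
def IsKanFibration {E B : SSet} (f : E ⟶ B) : Prop :=
  ∀ (n : ℕ) (i : Fin (n + 2)), HasLiftingProperty (SSet.horn (n + 1) i).ι f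

namespace KanAux

open Opposite SimplexCategory

/-- compatibility of a family of would-be faces of a simplex -/
def Compat (X : SSet) : (m : ℕ) → (S : Finset (Fin (m+2))) →
    ((k : Fin (m+2)) → k ∈ S → X.obj (op ⦋m⦌)) → Prop := fun m => match m with
  | 0 => fun _ _ => True
  | (m+1) => fun S x => ∀ (a b : Fin (m+3)) (ha : a ∈ S) (hb : b ∈ S) (hab : (a:ℕ) < (b:ℕ)),
      X.δ ⟨(a:ℕ), by omega⟩ (x b hb) = X.δ ⟨(b:ℕ)-1, by omega⟩ (x a ha)

lemma ddswap (X : SSet) {m : ℕ} (a b : ℕ) (ha : a < m+2) (hb : b < m+3) (h : a < b)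
    (z : X.obj (op ⦋m+2⦌)) :
    X.δ ⟨a, ha⟩ (X.δ ⟨b, hb⟩ z) = X.δ ⟨b-1, by omega⟩ (X.δ ⟨a, by omega⟩ z) := by
  have H : (⟨a, ha⟩ : Fin (m+2)) ≤ ⟨b-1, by omega⟩ := by
    rw [Fin.le_def]; simp; omega
  have h2 := types_congr_hom (X.δ_comp_δ H) z
  simp only [types_comp_apply] at h2
  have e1 : (Fin.succ (⟨b-1, by omega⟩ : Fin (m+2))) = ⟨b, hb⟩ := by
    ext; simp; omega
  have e2 : Fin.castSucc (⟨a, ha⟩ : Fin (m+2)) = (⟨a, by omega⟩ : Fin (m+3)) := by ext; simp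
  rw [e1, e2] at h2
  exact h2

lemma dcongr {X : SSet} {m : ℕ} {a b : ℕ} (ha : a < m+2) (hb : b < m+2) (hab : a = b)
    {z z' : X.obj (op ⦋m+1⦌)} (hz : z = z') : X.δ ⟨a, ha⟩ z = X.δ ⟨b, hb⟩ z' := by
  subst hab; subst hz; rfl

lemma fapp_δ {E B : SSet} (f : E ⟶ B) {m : ℕ} (c : Fin (m+2)) (z : E.obj (op ⦋m+1⦌)) :
    f.app _ (E.δ c z) = B.δ c (f.app _ z) :=
  types_congr_hom (f.naturality (SimplexCategory.δ c).op) z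

lemma succAbove_val {n : ℕ} (j : Fin (n+2)) (a : Fin (n+1)) :
    ((j.succAbove a) : ℕ) = if (a:ℕ) < (j:ℕ) then (a:ℕ) else (a:ℕ)+1 := by
  by_cases h : (a:ℕ) < (j:ℕ)
  · rw [if_pos h, Fin.succAbove_of_castSucc_lt _ _ (by rwa [Fin.lt_def])]
    rfl
  · rw [if_neg h, Fin.succAbove_of_le_castSucc _ _ (by rw [Fin.le_def]; simpa using h)]
    rfl

lemma delta_app {n : ℕ} (k : Fin (n+2)) (a : Fin (n+1)) :
    (SimplexCategory.δ k).toOrderHom a = k.succAbove a := rfl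

lemma comp_app {a b c : SimplexCategory} (g : a ⟶ b) (h : b ⟶ c) (v : Fin (a.len+1)) :
    (g ≫ h).toOrderHom v = h.toOrderHom (g.toOrderHom v) := rfl

lemma indep_lt {E : SSet} {m : ℕ} {S : Finset (Fin (m+2))}
    (x : (k : Fin (m+2)) → k ∈ S → E.obj (op ⦋m⦌))
    (hc : Compat E m S x) {l : ℕ} (g : (⦋l⦌ : SimplexCategory) ⟶ ⦋m+1⦌)
    (j k : Fin (m+2)) (hjS : j ∈ S) (hkS : k ∈ S) (hjk : (j:ℕ) < (k:ℕ))
    (hgj : ∀ a, g.toOrderHom a ≠ j) (hgk : ∀ a, g.toOrderHom a ≠ k) :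
    E.map (factor_δ g j).op (x j hjS) = E.map (factor_δ g k).op (x k hkS) := by
  cases m with
  | zero =>
    exfalso
    have h0 := Fin.val_ne_iff.mpr (hgj 0)
    have h1 := Fin.val_ne_iff.mpr (hgk 0)
    have h2 : ((Hom.toOrderHom g) 0).val < 2 := by
      simpa using ((Hom.toOrderHom g) 0).isLt
    omega
  | succ M =>
    set jj : Fin (M+2) := ⟨(j:ℕ), by omega⟩ with hjjdef
    set kk : Fin (M+2) := ⟨(k:ℕ)-1, by omega⟩ with hkkdef
    have h1 : ∀ a, (factor_δ g k).toOrderHom a ≠ jj := by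
      intro a hEq
      apply hgj a
      have hs := factor_δ_spec g k hgk
      rw [← hs, comp_app, hEq, delta_app]
      rw [Fin.succAbove_of_castSucc_lt]
      · ext; simp [jj]
      · rw [Fin.lt_def]; simp [jj]; omega
    have h2 : ∀ a, (factor_δ g j).toOrderHom a ≠ kk := by
      intro a hEq
      apply hgk a
      have hs := factor_δ_spec g j hgj
      rw [← hs, comp_app, hEq, delta_app]
      rw [Fin.succAbove_of_le_castSucc]
      · ext; simp [kk]; omega
      · rw [Fin.le_def]; simp [kk]; omega
    have spec1 := factor_δ_spec (factor_δ g k) jj h1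
    have spec2 := factor_δ_spec (factor_δ g j) kk h2
    have key : SimplexCategory.δ jj ≫ SimplexCategory.δ k
        = SimplexCategory.δ kk ≫ SimplexCategory.δ j := by
      have e1 : Fin.succ kk = k := by ext; simp [kk]; omega
      have e2 : Fin.castSucc jj = j := by ext; simp [jj]
      have := SimplexCategory.δ_comp_δ (i := jj) (j := kk)
        (by rw [Fin.le_def]; simp [jj, kk]; omega)
      rw [e1, e2] at this
      exact this
    have γeq : factor_δ (factor_δ g k) jj = factor_δ (factor_δ g j) kk := by
      have hA : factor_δ (factor_δ g k) jj ≫ (SimplexCategory.δ kk ≫ SimplexCategory.δ j)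
          = g := by
        rw [← key, ← Category.assoc, spec1, factor_δ_spec g k hgk]
      have hB : factor_δ (factor_δ g j) kk ≫ (SimplexCategory.δ kk ≫ SimplexCategory.δ j)
          = g := by
        rw [← Category.assoc, spec2, factor_δ_spec g j hgj]
      have := hA.trans hB.symm
      rwa [← Category.assoc, ← Category.assoc, cancel_mono, cancel_mono] at this
    have hcs := hc j k hjS hkS hjk
    calc E.map (factor_δ g j).op (x j hjS)
        = E.map (factor_δ (factor_δ g j) kk ≫ SimplexCategory.δ kk).op (x j hjS) := by
          rw [spec2]
      _ = E.map (factor_δ (factor_δ g j) kk).op (E.δ kk (x j hjS)) := by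
          rw [op_comp]; exact types_congr_hom (E.map_comp _ _) _
      _ = E.map (factor_δ (factor_δ g k) jj).op (E.δ jj (x k hkS)) := by
          rw [γeq, hcs]
      _ = E.map (factor_δ (factor_δ g k) jj ≫ SimplexCategory.δ jj).op (x k hkS) := by
          rw [op_comp]; exact (types_congr_hom (E.map_comp _ _) _).symm
      _ = E.map (factor_δ g k).op (x k hkS) := by rw [spec1]

lemma indep {E : SSet} {m : ℕ} {S : Finset (Fin (m+2))}
    (x : (k : Fin (m+2)) → k ∈ S → E.obj (op ⦋m⦌))
    (hc : Compat E m S x) {l : ℕ} (g : (⦋l⦌ : SimplexCategory) ⟶ ⦋m+1⦌)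
    (j k : Fin (m+2)) (hjS : j ∈ S) (hkS : k ∈ S)
    (hgj : ∀ a, g.toOrderHom a ≠ j) (hgk : ∀ a, g.toOrderHom a ≠ k) :
    E.map (factor_δ g j).op (x j hjS) = E.map (factor_δ g k).op (x k hkS) := by
  rcases Nat.lt_trichotomy (j:ℕ) (k:ℕ) with h|h|h
  · exact indep_lt x hc g j k hjS hkS h hgj hgk
  · have hjk : j = k := Fin.ext h
    subst hjk; rfl
  · exact (indep_lt x hc g k j hkS hjS h hgk hgj).symm

/-- the map `Δ[n] ⟶ X` associated to a simplex -/
def fromSimplex {X : SSet} {n : ℕ} (e : X.obj (op ⦋n⦌)) : Δ[n] ⟶ X where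
  app l := TypeCat.ofHom fun α => X.map (SSet.stdSimplex.objEquiv α).op e
  naturality l₁ l₂ g := by
    ext α
    show X.map (SSet.stdSimplex.objEquiv (Δ[n].map g α)).op e
      = X.map g (X.map (SSet.stdSimplex.objEquiv α).op e)
    rw [← Functor.map_comp_apply]
    rfl

noncomputable def idsx (n : ℕ) : Δ[n].obj (op ⦋n⦌) :=
  (SSet.stdSimplex.objEquiv).symm (𝟙 (⦋n⦌ : SimplexCategory))

theorem eval {X : SSet} {n : ℕ} (v : Δ[n] ⟶ X) (l : SimplexCategoryᵒᵖ) (α : Δ[n].obj l) :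
    v.app l α = X.map (SSet.stdSimplex.objEquiv α).op (v.app _ (idsx n)) := by
  have h1 : α = Δ[n].map ((SSet.stdSimplex.objEquiv) α).op (idsx n) := by
    rw [SSet.stdSimplex.map_apply]; simp [idsx]
  conv_lhs => rw [h1]
  exact NatTrans.naturality_apply v _ _

def KanFam {E B : SSet} (f : E ⟶ B) : Prop :=
  ∀ (m : ℕ) (i : Fin (m+2)) (b : B.obj (op ⦋m+1⦌))
    (x : (k : Fin (m+2)) → k ∈ ({i}ᶜ : Finset (Fin (m+2))) → E.obj (op ⦋m⦌)),
    (∀ k hk, f.app _ (x k hk) = B.δ k b) → Compat E m ({i}ᶜ) x →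
    ∃ e : E.obj (op ⦋m+1⦌), f.app _ e = b ∧ ∀ k hk, E.δ k e = x k hk

theorem hornKanFam {E B : SSet} (f : E ⟶ B) (hf : IsKanFibration f) : KanFam f := by
  intro m i b x hfx hc
  classical
  have memci : ∀ {k : Fin (m+2)}, k ≠ i → k ∈ ({i}ᶜ : Finset (Fin (m+2))) := by
    intro k h; simp [h]
  have exmiss : ∀ (l : SimplexCategoryᵒᵖ) (α : (SSet.horn (m+1) i).obj l),
      ∃ j : Fin (m+2), ¬j = i ∧ ∀ a, (SSet.stdSimplex.asOrderHom α.1) a ≠ j := by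
    intro l α
    simpa [← Set.univ_subset_iff, Set.subset_def, SSet.stdSimplex.asOrderHom, not_or] using (SSet.mem_horn_iff i α.1).mp α.2
  choose jc hjne hjmiss using exmiss
  let σ₀ : (SSet.horn (m+1) i : SSet) ⟶ E :=
  { app := fun l => TypeCat.ofHom fun α =>
      E.map (factor_δ (m := l.unop.len)
        ((SSet.stdSimplex.objEquiv) α.1) (jc l α)).op (x _ (memci (hjne l α)))
    naturality := by
      intro l₁ l₂ gg
      ext α
      simp only [types_comp_apply]
      set β := (SSet.horn (m+1) i : SSet).map gg α with hβdef
      have hβ : (SSet.stdSimplex.objEquiv) β.1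
          = gg.unop ≫ (SSet.stdSimplex.objEquiv) α.1 := by
        show (SSet.stdSimplex.objEquiv) (Δ[m+1].map gg α.1) = _
        rw [SSet.stdSimplex.map_apply]
        simp
      have hmissβ : ∀ a, (gg.unop ≫ (SSet.stdSimplex.objEquiv) α.1).toOrderHom a
          ≠ jc l₂ β := by
        intro a
        have := hjmiss l₂ β a
        rwa [show (SSet.stdSimplex.asOrderHom β.1) = ((SSet.stdSimplex.objEquiv) β.1).toOrderHom
          from rfl, hβ] at this
      have hmissα : ∀ a, (gg.unop ≫ (SSet.stdSimplex.objEquiv) α.1).toOrderHom a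
          ≠ jc l₁ α := by
        intro a
        exact hjmiss l₁ α (gg.unop.toOrderHom a)
      show E.map (factor_δ (m := l₂.unop.len)
          ((SSet.stdSimplex.objEquiv) β.1) (jc l₂ β)).op
          (x _ (memci (hjne l₂ β))) = _
      rw [hβ]
      rw [indep (l := l₂.unop.len) x hc (gg.unop ≫ (SSet.stdSimplex.objEquiv) α.1)
        (jc l₂ β) (jc l₁ α) (memci (hjne l₂ β)) (memci (hjne l₁ α)) hmissβ hmissα]
      have hfac : factor_δ (m := l₂.unop.len)
            (gg.unop ≫ (SSet.stdSimplex.objEquiv) α.1) (jc l₁ α)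
          = gg.unop ≫ factor_δ (m := l₁.unop.len)
            ((SSet.stdSimplex.objEquiv) α.1) (jc l₁ α) := by
        have h1 := factor_δ_spec (m := l₂.unop.len)
          (gg.unop ≫ (SSet.stdSimplex.objEquiv) α.1) (jc l₁ α) hmissα
        have h2 := factor_δ_spec (m := l₁.unop.len)
          ((SSet.stdSimplex.objEquiv) α.1) (jc l₁ α) (hjmiss l₁ α)
        have : (gg.unop ≫ factor_δ (m := l₁.unop.len)
              ((SSet.stdSimplex.objEquiv) α.1) (jc l₁ α))
            ≫ SimplexCategory.δ (jc l₁ α)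
            = gg.unop ≫ (SSet.stdSimplex.objEquiv) α.1 := by
          rw [Category.assoc, h2]
        exact (cancel_mono (SimplexCategory.δ (jc l₁ α))).mp (h1.trans this.symm)
      rw [hfac, op_comp]
      exact types_congr_hom (E.map_comp _ _) _ }
  have happ : ∀ (l : SimplexCategoryᵒᵖ) (α : (SSet.horn (m+1) i).obj l),
      σ₀.app l α = E.map (factor_δ (m := l.unop.len)
        ((SSet.stdSimplex.objEquiv) α.1) (jc l α)).op
        (x _ (memci (hjne l α))) := fun l α => rfl
  have hw : σ₀ ≫ f = (SSet.horn (m+1) i).ι ≫ fromSimplex b := by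
    apply SSet.hom_ext; intro l; ext α
    show f.app _ (σ₀.app l α)
        = B.map ((SSet.stdSimplex.objEquiv) α.1).op b
    rw [happ l α]
    refine (types_congr_hom (f.naturality (factor_δ (m := l.unop.len)
      ((SSet.stdSimplex.objEquiv) α.1) (jc l α)).op) (x _ (memci (hjne l α)))).trans ?_
    show B.map _ (f.app _ (x _ (memci (hjne l α)))) = _
    rw [hfx _ (memci (hjne l α))]
    show B.map _ (B.map (SimplexCategory.δ (jc l α)).op b) = _
    rw [← FunctorToTypes.map_comp_apply, ← op_comp,
      factor_δ_spec (m := l.unop.len) ((SSet.stdSimplex.objEquiv) α.1) (jc l α)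
        (hjmiss l α)]
  have hsq : CommSq σ₀ ((SSet.horn (m+1) i).ι) f (fromSimplex b) := ⟨hw⟩
  haveI := hf m i
  refine ⟨hsq.lift.app _ (idsx (m+1)), ?_, ?_⟩
  · have h1 := types_congr_hom (NatTrans.congr_app hsq.fac_right (op ⦋m+1⦌)) (idsx (m+1))
    have h1' : f.app (op ⦋m+1⦌) (hsq.lift.app _ (idsx (m+1)))
        = (fromSimplex b).app _ (idsx (m+1)) := h1
    rw [h1']
    simp [fromSimplex, idsx]
  · intro k hk
    have hki : k ≠ i := by simpa using hk
    have hface : E.δ k (hsq.lift.app _ (idsx (m+1)))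
        = hsq.lift.app _ ((SSet.horn.face i k hki).1) := by
      have hn := NatTrans.naturality_apply hsq.lift (SimplexCategory.δ k).op (idsx (m+1))
      have : Δ[m+1].map (SimplexCategory.δ k).op (idsx (m+1)) = (SSet.horn.face i k hki).1 := by
        rw [SSet.stdSimplex.map_apply]
        simp [idsx, SSet.horn.face, Category.comp_id]
        rfl
      rw [this] at hn
      exact hn.symm
    rw [hface]
    have h2 := types_congr_hom (NatTrans.congr_app hsq.fac_left (op ⦋m⦌)) (SSet.horn.face i k hki)
    have h2' : hsq.lift.app (op ⦋m⦌) (SSet.horn.face i k hki).1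
        = σ₀.app _ (SSet.horn.face i k hki) := h2
    rw [h2']; refine (happ _ _).trans ?_
    have hmissk : ∀ a, ((SSet.stdSimplex.objEquiv) (SSet.horn.face i k hki).1).toOrderHom a ≠ k := by
      intro a
      simp only [SSet.horn.face, Equiv.apply_symm_apply]
      exact Fin.succAbove_ne k a
    rw [indep (l := m) x hc _ (jc _ (SSet.horn.face i k hki)) k
      (memci (hjne _ _)) (memci hki) (by
        intro a
        have := hjmiss _ (SSet.horn.face i k hki) a
        exact this) hmissk]
    have hid : factor_δ ((SSet.stdSimplex.objEquiv (n := ⦋m+1⦌) (m := op ⦋m⦌)) (SSet.horn.face i k hki).1) k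
        = 𝟙 (⦋m⦌ : SimplexCategory) := by
      apply (cancel_mono (SimplexCategory.δ k)).mp
      rw [factor_δ_spec _ k hmissk, Category.id_comp]
      simp [SSet.horn.face]
      rfl
    rw [hid]
    simp

def subFam (E : SSet) {m : ℕ} (j : Fin (m+3)) (S : Finset (Fin (m+3)))
    (x : (k : Fin (m+3)) → k ∈ S → E.obj (op ⦋m+1⦌)) :
    (a : Fin (m+2)) → a ∈ Finset.filter (fun a => j.succAbove a ∈ S) Finset.univ →
      E.obj (op ⦋m⦌) :=
  fun a ha =>
    if _ : (a:ℕ) < (j:ℕ) then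
      E.δ ⟨(j:ℕ)-1, by omega⟩ (x (j.succAbove a) ((Finset.mem_filter.mp ha).2))
    else
      E.δ ⟨(j:ℕ), by omega⟩ (x (j.succAbove a) ((Finset.mem_filter.mp ha).2))

lemma subFam_compat (E : SSet) {m : ℕ} (j : Fin (m+3)) (S : Finset (Fin (m+3)))
    (x : (k : Fin (m+3)) → k ∈ S → E.obj (op ⦋m+1⦌))
    (hc : Compat E (m+1) S x) :
    Compat E m (Finset.filter (fun a => j.succAbove a ∈ S) Finset.univ) (subFam E j S x) := by
  cases m with
  | zero => trivial
  | succ M =>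
    intro u w hu hw huw
    have hku : j.succAbove u ∈ S := (Finset.mem_filter.mp hu).2
    have hkw : j.succAbove w ∈ S := (Finset.mem_filter.mp hw).2
    have hvu := succAbove_val j u
    have hvw := succAbove_val j w
    have hkuw : ((j.succAbove u : Fin (M+4)) : ℕ) < ((j.succAbove w : Fin (M+4)) : ℕ) := by
      rw [hvu, hvw]; split <;> split <;> omega
    have hcx := hc (j.succAbove u) (j.succAbove w) hku hkw hkuw
    show E.δ ⟨(u:ℕ), by omega⟩ (subFam E j S x w hw)
        = E.δ ⟨(w:ℕ)-1, by omega⟩ (subFam E j S x u hu)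
    unfold subFam
    by_cases hW : (w:ℕ) < (j:ℕ)
    · -- Case A : u < w < j
      have hU : (u:ℕ) < (j:ℕ) := by omega
      have hvu' : ((j.succAbove u : Fin (M+4)) : ℕ) = (u:ℕ) := by rw [hvu, if_pos hU]
      have hvw' : ((j.succAbove w : Fin (M+4)) : ℕ) = (w:ℕ) := by rw [hvw, if_pos hW]
      rw [dif_pos hW, dif_pos hU]
      refine (ddswap E (u:ℕ) ((j:ℕ)-1) (by omega) (by omega) (by omega) _).trans ?_
      refine Eq.trans ?_ (ddswap E ((w:ℕ)-1) ((j:ℕ)-1) (by omega) (by omega) (by omega) _).symm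
      refine dcongr (by omega) (by omega) rfl ?_
      refine (dcongr (by omega) (by omega) (by omega) rfl).trans
        (hcx.trans (dcongr (by omega) (by omega) (by omega) rfl))
    · by_cases hU : (u:ℕ) < (j:ℕ)
      · -- Case B : u < j ≤ w
        have hvu' : ((j.succAbove u : Fin (M+4)) : ℕ) = (u:ℕ) := by rw [hvu, if_pos hU]
        have hvw' : ((j.succAbove w : Fin (M+4)) : ℕ) = (w:ℕ)+1 := by rw [hvw, if_neg hW]
        rw [dif_neg hW, dif_pos hU]
        refine (ddswap E (u:ℕ) (j:ℕ) (by omega) (by omega) (by omega) _).trans ?_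
        refine Eq.trans ?_ (ddswap E ((j:ℕ)-1) (w:ℕ) (by omega) (by omega) (by omega) _)
        refine dcongr (by omega) (by omega) rfl ?_
        refine (dcongr (by omega) (by omega) (by omega) rfl).trans
          (hcx.trans (dcongr (by omega) (by omega) (by omega) rfl))
      · -- Case C : j ≤ u < w
        have hvu' : ((j.succAbove u : Fin (M+4)) : ℕ) = (u:ℕ)+1 := by rw [hvu, if_neg hU]
        have hvw' : ((j.succAbove w : Fin (M+4)) : ℕ) = (w:ℕ)+1 := by rw [hvw, if_neg hW]
        rw [dif_neg hW, dif_neg hU]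
        refine Eq.trans ?_ (ddswap E ((j:ℕ)) (w:ℕ) (by omega) (by omega) (by omega) _)
        refine (dcongr (b := (u:ℕ)+1-1) (by omega) (by omega) (by omega) rfl).trans ?_
        refine ((ddswap E ((j:ℕ)) ((u:ℕ)+1) (by omega) (by omega) (by omega) _).symm).trans ?_
        refine dcongr (by omega) (by omega) rfl ?_
        refine (dcongr (by omega) (by omega) (by omega) rfl).trans
          (hcx.trans (dcongr (by omega) (by omega) (by omega) rfl))

lemma subFam_f {E B : SSet} (f : E ⟶ B) {m : ℕ} (j : Fin (m+3)) (S : Finset (Fin (m+3)))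
    (b : B.obj (op ⦋m+2⦌)) (x : (k : Fin (m+3)) → k ∈ S → E.obj (op ⦋m+1⦌))
    (hfx : ∀ k hk, f.app _ (x k hk) = B.δ k b) :
    ∀ a ha, f.app _ (subFam E j S x a ha) = B.δ a (B.δ j b) := by
  intro a ha
  have hva := succAbove_val j a
  unfold subFam
  split
  case isTrue h =>
    have hva' : ((j.succAbove a : Fin (m+3)) : ℕ) = (a:ℕ) := by rw [hva, if_pos h]
    rw [fapp_δ, hfx]
    calc B.δ ⟨(j:ℕ)-1, by omega⟩ (B.δ (j.succAbove a) b)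
        = B.δ ⟨(j:ℕ)-1, by omega⟩ (B.δ ⟨(a:ℕ), by omega⟩ b) :=
          dcongr (by omega) (by omega) rfl
            (dcongr (a := ((j.succAbove a : Fin (m+3)) : ℕ)) (by omega) (by omega) (by omega) rfl)
      _ = B.δ a (B.δ j b) :=
          (ddswap B (a:ℕ) (j:ℕ) (by omega) (by omega) (by omega) b).symm
  case isFalse h =>
    have hva' : ((j.succAbove a : Fin (m+3)) : ℕ) = (a:ℕ)+1 := by rw [hva, if_neg h]
    rw [fapp_δ, hfx]
    calc B.δ ⟨(j:ℕ), by omega⟩ (B.δ (j.succAbove a) b)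
        = B.δ (⟨((j.succAbove a : Fin (m+3)) : ℕ)-1, by omega⟩ : Fin (m+2))
            (B.δ ⟨(j:ℕ), by omega⟩ b) :=
          ddswap B (j:ℕ) ((j.succAbove a : Fin (m+3)) : ℕ) (by omega)
            (by omega) (by omega) b
      _ = B.δ a (B.δ j b) := dcongr (by omega) (by omega) (by omega) rfl

theorem fill {E B : SSet} (f : E ⟶ B) (hK : KanFam f) :
    ∀ (t m : ℕ) (S : Finset (Fin (m+2))), Sᶜ.card = t + 1 → S.Nonempty →
    ∀ (b : B.obj (op ⦋m+1⦌)) (x : (k : Fin (m+2)) → k ∈ S → E.obj (op ⦋m⦌)),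
    (∀ k hk, f.app _ (x k hk) = B.δ k b) → Compat E m S x →
    ∃ e : E.obj (op ⦋m+1⦌), f.app _ e = b ∧ ∀ k hk, E.δ k e = x k hk := by
  intro t
  induction t with
  | zero =>
    intro m S hcard hne b x hfx hc
    obtain ⟨i, hi⟩ := Finset.card_eq_one.mp hcard
    have hS : ({i}ᶜ : Finset (Fin (m+2))) = S := by rw [← hi, compl_compl]
    subst hS
    exact hK m i b x hfx hc
  | succ t ih =>
    intro m S hcard hne b x hfx hc
    cases m with
    | zero =>
      exfalso
      have h1 := Finset.card_add_card_compl S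
      have h2 := Finset.card_pos.mpr hne
      rw [Fintype.card_fin] at h1
      omega
    | succ m =>
      classical
      have hcne : (Sᶜ).Nonempty := Finset.card_pos.mp (by omega)
      obtain ⟨j, hj⟩ := hcne
      have hjS : j ∉ S := Finset.mem_compl.mp hj
      set T := Finset.filter (fun a => j.succAbove a ∈ S) Finset.univ with hT
      have hST : S = T.image (j.succAbove) := by
        ext k
        constructor
        · intro hk
          have hkj : k ≠ j := fun h => hjS (h ▸ hk)
          obtain ⟨a, ha⟩ := Fin.exists_succAbove_eq hkj
          exact Finset.mem_image.mpr
            ⟨a, Finset.mem_filter.mpr ⟨Finset.mem_univ _, ha.symm ▸ hk⟩, ha⟩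
        · intro hk
          obtain ⟨a, haf, rfl⟩ := Finset.mem_image.mp hk
          exact (Finset.mem_filter.mp haf).2
      have hTcard : T.card = S.card := by
        rw [hST, Finset.card_image_of_injective _ (Fin.succAbove_right_injective)]
      have hc1 := Finset.card_add_card_compl S
      have hc2 := Finset.card_add_card_compl T
      rw [Fintype.card_fin] at hc1
      rw [Fintype.card_fin] at hc2
      have hSpos : 0 < S.card := Finset.card_pos.mpr hne
      have hTc : Tᶜ.card = t + 1 := by omega
      have hTne : T.Nonempty := Finset.card_pos.mp (by omega)
      obtain ⟨xj, hxjf, hxjd⟩ := ih m T hTc hTne (B.δ j b) (subFam E j S x)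
        (subFam_f f j S b x hfx) (subFam_compat E j S x hc)
      -- the extended family
      set x₂ : (k : Fin (m+3)) → k ∈ insert j S → E.obj (op ⦋m+1⦌) := fun k hk =>
        if h : k = j then xj else x k ((Finset.mem_insert.mp hk).resolve_left h) with hx₂
      have hins : (insert j S)ᶜ.card = t + 1 := by
        have h4 := Finset.card_insert_of_notMem hjS
        have hc3 := Finset.card_add_card_compl (insert j S)
        rw [Fintype.card_fin] at hc3
        omega
      have hfx₂ : ∀ k hk, f.app _ (x₂ k hk) = B.δ k b := by
        intro k hk
        by_cases h : k = j
        · subst h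
          simp only [hx₂, dif_pos rfl]
          exact hxjf
        · simp only [hx₂, dif_neg h]
          exact hfx k _
      have xgen : ∀ (k k' : Fin (m+3)) (h1 : k ∈ S) (h2 : k' ∈ S), k = k' → x k h1 = x k' h2 := by
        rintro k k' h1 h2 rfl; rfl
      have hc₂ : Compat E (m+1) (insert j S) x₂ := by
        intro a c ha hcc hac
        by_cases haj : a = j
        · subst haj
          have hcj : c ≠ a := by
            intro h; subst h; omega
          have hcS : c ∈ S := (Finset.mem_insert.mp hcc).resolve_left hcj
          simp only [hx₂, dif_neg hcj, dif_pos rfl]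
          have hmem : a.succAbove (⟨(c:ℕ)-1, by omega⟩ : Fin (m+2)) = c := by
            ext
            rw [succAbove_val]
            simp only
            rw [if_neg (by omega)]
            omega
          have hmemT : (⟨(c:ℕ)-1, by omega⟩ : Fin (m+2)) ∈ T :=
            Finset.mem_filter.mpr ⟨Finset.mem_univ _, by rw [hmem]; exact hcS⟩
          have hthis := hxjd ⟨(c:ℕ)-1, by omega⟩ hmemT
          refine Eq.trans ?_ hthis.symm
          show _ = subFam E a S x ⟨(c:ℕ)-1, _⟩ hmemT
          unfold subFam
          rw [dif_neg (by simp only; omega)]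
          exact dcongr (by omega) (by omega) rfl (xgen _ _ _ _ hmem.symm)
        · by_cases hcj : c = j
          · subst hcj
            have haS : a ∈ S := (Finset.mem_insert.mp ha).resolve_left haj
            simp only [hx₂, dif_pos rfl, dif_neg haj]
            have hmem : c.succAbove (⟨(a:ℕ), by omega⟩ : Fin (m+2)) = a := by
              ext
              rw [succAbove_val]
              simp only
              rw [if_pos (by omega)]
            have hmemT : (⟨(a:ℕ), by omega⟩ : Fin (m+2)) ∈ T :=
              Finset.mem_filter.mpr ⟨Finset.mem_univ _, by rw [hmem]; exact haS⟩
            have hthis := hxjd ⟨(a:ℕ), by omega⟩ hmemT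
            refine hthis.trans ?_
            show subFam E c S x ⟨(a:ℕ), _⟩ hmemT = _
            unfold subFam
            rw [dif_pos (by simp only; omega)]
            exact dcongr (by omega) (by omega) rfl (xgen _ _ _ _ hmem)
          · have haS : a ∈ S := (Finset.mem_insert.mp ha).resolve_left haj
            have hcS : c ∈ S := (Finset.mem_insert.mp hcc).resolve_left hcj
            simp only [hx₂, dif_neg haj, dif_neg hcj]
            exact hc a c haS hcS hac
      obtain ⟨e, hef, hed⟩ := ih (m+1) (insert j S) hins
        ⟨j, Finset.mem_insert_self j S⟩ b x₂ hfx₂ hc₂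
      refine ⟨e, hef, ?_⟩
      intro k hk
      have h2 := hed k (Finset.mem_insert_of_mem hk)
      rw [h2]
      simp only [hx₂]
      rw [dif_neg (fun (h : k = j) => hjS (h ▸ hk))]

end KanAux

open Opposite SimplexCategory KanAux in
/-- Every Kan fibration is a Skvortsov-Shehtman fibration: it has the right lifting property
with respect to all rhombus inclusions `Λ_{p,q}[n] ↪ Δ[n]`, `n > 1`, `0 ≤ p < q ≤ n`. -/
theorem isKanFibration_hasLiftingProperty_rhombus {E B : SSet} (f : E ⟶ B)
    (hf : IsKanFibration f) (n : ℕ) (p q : Fin (n + 3)) (hpq : p < q) :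
    HasLiftingProperty (SSet.rhombusInclusion (n + 2) p q) f := by
  classical
  constructor
  intro u v sq
  set b := v.app _ (idsx (n+2)) with hb
  have hpm : p ∉ Set.range (SSet.stdSimplex.asOrderHom
      ((SSet.stdSimplex.objEquiv).symm (SimplexCategory.δ p) : Δ[n+2].obj (op ⦋n+1⦌))) := by
    rintro ⟨a, ha⟩; exact Fin.succAbove_ne p a ha
  have hqm : q ∉ Set.range (SSet.stdSimplex.asOrderHom
      ((SSet.stdSimplex.objEquiv).symm (SimplexCategory.δ q) : Δ[n+2].obj (op ⦋n+1⦌))) := by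
    rintro ⟨a, ha⟩; exact Fin.succAbove_ne q a ha
  set gp : (SSet.rhombus (n+2) p q).obj (op ⦋n+1⦌) :=
    ⟨(SSet.stdSimplex.objEquiv).symm (SimplexCategory.δ p), Or.inl hpm⟩ with hgp
  set gq : (SSet.rhombus (n+2) p q).obj (op ⦋n+1⦌) :=
    ⟨(SSet.stdSimplex.objEquiv).symm (SimplexCategory.δ q), Or.inr hqm⟩ with hgq
  set ep := u.app _ gp with hep
  set eq' := u.app _ gq with heq'
  have hqp : q ≠ p := Fin.ne_of_gt hpq
  set S : Finset (Fin (n+3)) := {p, q} with hS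
  set x : (k : Fin (n+3)) → k ∈ S → E.obj (op ⦋n+1⦌) :=
    fun k _ => if k = p then ep else eq' with hx
  -- the commutative square, evaluated at the two generators
  have hsqp : f.app _ ep = B.δ p b := by
    have h0 := types_congr_hom (NatTrans.congr_app sq.w (op ⦋n+1⦌)) gp
    have h0' : f.app _ (u.app _ gp) = v.app _ gp.1 := h0
    rw [hep, h0', eval v _ gp.1, hgp]
    simp only [Equiv.apply_symm_apply]
    rfl
  have hsqq : f.app _ eq' = B.δ q b := by
    have h0 := types_congr_hom (NatTrans.congr_app sq.w (op ⦋n+1⦌)) gq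
    have h0' : f.app _ (u.app _ gq) = v.app _ gq.1 := h0
    rw [heq', h0', eval v _ gq.1, hgq]
    simp only [Equiv.apply_symm_apply]
    rfl
  have hfx : ∀ k hk, f.app _ (x k hk) = B.δ k b := by
    intro k hk
    rcases Finset.mem_insert.mp hk with h | h
    · subst h; rw [hx]; simp only [if_pos rfl]; exact hsqp
    · rw [Finset.mem_singleton] at h
      subst h
      rw [hx]; simp only [if_neg hqp]; exact hsqq
  -- compatibility of the two faces, from naturality of u
  have key : SimplexCategory.δ (⟨(p:ℕ), by omega⟩ : Fin (n+2)) ≫ SimplexCategory.δ q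
      = SimplexCategory.δ (⟨(q:ℕ)-1, by omega⟩ : Fin (n+2)) ≫ SimplexCategory.δ p := by
    have h5 := SimplexCategory.δ_comp_δ (i := (⟨(p:ℕ), by omega⟩ : Fin (n+2)))
      (j := (⟨(q:ℕ)-1, by omega⟩ : Fin (n+2))) (by rw [Fin.le_def]; simp; omega)
    rw [show Fin.succ (⟨(q:ℕ)-1, by omega⟩ : Fin (n+2)) = q from by ext; simp; omega,
      show Fin.castSucc (⟨(p:ℕ), by omega⟩ : Fin (n+2)) = p from by ext; simp] at h5
    exact h5
  have hcompat : Compat E (n+1) S x := by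
    intro a c ha hcc hac
    have hap : a = p ∨ a = q := by
      rcases Finset.mem_insert.mp ha with h | h
      · exact Or.inl h
      · exact Or.inr (Finset.mem_singleton.mp h)
    have hcp : c = p ∨ c = q := by
      rcases Finset.mem_insert.mp hcc with h | h
      · exact Or.inl h
      · exact Or.inr (Finset.mem_singleton.mp h)
    have hpq' : (p:ℕ) < (q:ℕ) := hpq
    have hav : (a:ℕ) = (p:ℕ) ∨ (a:ℕ) = (q:ℕ) := by
      rcases hap with h | h
      · exact Or.inl (by rw [h])
      · exact Or.inr (by rw [h])
    have hcv : (c:ℕ) = (p:ℕ) ∨ (c:ℕ) = (q:ℕ) := by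
      rcases hcp with h | h
      · exact Or.inl (by rw [h])
      · exact Or.inr (by rw [h])
    have hae : a = p := Fin.ext (by omega)
    have hce : c = q := Fin.ext (by omega)
    subst hae
    subst hce
    rw [hx]
    simp only [if_pos rfl, if_neg hqp]
    have hn1 := NatTrans.naturality_apply u
      (SimplexCategory.δ (⟨(a:ℕ), by omega⟩ : Fin (n+2))).op gq
    have hn2 := NatTrans.naturality_apply u
      (SimplexCategory.δ (⟨(c:ℕ)-1, by omega⟩ : Fin (n+2))).op gp
    show E.map (SimplexCategory.δ (⟨(a:ℕ), by omega⟩ : Fin (n+2))).op (u.app _ gq)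
        = E.map (SimplexCategory.δ (⟨(c:ℕ)-1, by omega⟩ : Fin (n+2))).op (u.app _ gp)
    rw [← hn1, ← hn2]
    refine congrArg (u.app (op ⦋n⦌)) (Subtype.ext ?_)
    show Δ[n+2].map _ gq.1 = Δ[n+2].map _ gp.1
    rw [SSet.stdSimplex.map_apply, SSet.stdSimplex.map_apply]
    simp only [hgp, hgq, Equiv.apply_symm_apply, Quiver.Hom.unop_op]
    rw [key]
  have hcard : S.card = 2 := by
    rw [hS, Finset.card_insert_of_notMem (by simpa using Fin.ne_of_lt hpq),
      Finset.card_singleton]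
  have hScc : Sᶜ.card = n + 1 := by
    have h6 := Finset.card_add_card_compl S
    rw [Fintype.card_fin] at h6
    omega
  obtain ⟨e, hef, hed⟩ := fill f (hornKanFam f hf) n (n+1) S hScc
    ⟨p, Finset.mem_insert_self _ _⟩ b x hfx hcompat
  have hedp : E.δ p e = ep := by
    have h7 := hed p (Finset.mem_insert_self _ _)
    rw [h7, hx]
    simp
  have hedq : E.δ q e = eq' := by
    have h7 := hed q (by simp [hS])
    rw [h7, hx]
    simp [hqp]
  constructor
  refine ⟨⟨fromSimplex e, ?_, ?_⟩⟩
  · -- fac_left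
    apply SSet.hom_ext
    intro l
    ext α
    show E.map ((SSet.stdSimplex.objEquiv) α.1).op e = u.app l α
    rcases α.2 with hmiss | hmiss
    · -- misses p
      have hm : ∀ a', ((SSet.stdSimplex.objEquiv) α.1).toOrderHom a' ≠ p :=
        fun a' ha' => hmiss ⟨a', ha'⟩
      have hspec : factor_δ (m := l.unop.len)
            ((SSet.stdSimplex.objEquiv (n := ⦋n+2⦌) (m := l)) α.1) p ≫ SimplexCategory.δ p
          = (SSet.stdSimplex.objEquiv (n := ⦋n+2⦌) (m := l)) α.1 := factor_δ_spec _ p hm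
      have hα : α = (SSet.rhombus (n+2) p q).map
          (factor_δ (m := l.unop.len) ((SSet.stdSimplex.objEquiv (n := ⦋n+2⦌) (m := l)) α.1) p).op gp := by
        apply Subtype.ext
        show α.1 = Δ[n+2].map _ gp.1
        rw [SSet.stdSimplex.map_apply]
        simp only [hgp, Equiv.apply_symm_apply, Quiver.Hom.unop_op]
        rw [hspec]
        exact (Equiv.symm_apply_apply _ _).symm
      have hnat : u.app _ ((SSet.rhombus (n+2) p q).map
          (factor_δ (m := l.unop.len) ((SSet.stdSimplex.objEquiv (n := ⦋n+2⦌) (m := l)) α.1) p).op gp)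
          = E.map (factor_δ (m := l.unop.len)
              ((SSet.stdSimplex.objEquiv (n := ⦋n+2⦌) (m := l)) α.1) p).op ep :=
        NatTrans.naturality_apply u _ _
      conv_rhs => rw [hα]
      refine Eq.trans ?_ hnat.symm
      rw [← hedp]
      show _ = E.map _ (E.map (SimplexCategory.δ p).op e)
      rw [← FunctorToTypes.map_comp_apply, ← op_comp, hspec]
    · -- misses q
      have hm : ∀ a', ((SSet.stdSimplex.objEquiv) α.1).toOrderHom a' ≠ q :=
        fun a' ha' => hmiss ⟨a', ha'⟩
      have hspec : factor_δ (m := l.unop.len)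
            ((SSet.stdSimplex.objEquiv (n := ⦋n+2⦌) (m := l)) α.1) q ≫ SimplexCategory.δ q
          = (SSet.stdSimplex.objEquiv (n := ⦋n+2⦌) (m := l)) α.1 := factor_δ_spec _ q hm
      have hα : α = (SSet.rhombus (n+2) p q).map
          (factor_δ (m := l.unop.len) ((SSet.stdSimplex.objEquiv (n := ⦋n+2⦌) (m := l)) α.1) q).op gq := by
        apply Subtype.ext
        show α.1 = Δ[n+2].map _ gq.1
        rw [SSet.stdSimplex.map_apply]
        simp only [hgq, Equiv.apply_symm_apply, Quiver.Hom.unop_op]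
        rw [hspec]
        exact (Equiv.symm_apply_apply _ _).symm
      have hnat : u.app _ ((SSet.rhombus (n+2) p q).map
          (factor_δ (m := l.unop.len) ((SSet.stdSimplex.objEquiv (n := ⦋n+2⦌) (m := l)) α.1) q).op gq)
          = E.map (factor_δ (m := l.unop.len)
              ((SSet.stdSimplex.objEquiv (n := ⦋n+2⦌) (m := l)) α.1) q).op eq' :=
        NatTrans.naturality_apply u _ _
      conv_rhs => rw [hα]
      refine Eq.trans ?_ hnat.symm
      rw [← hedq]
      show _ = E.map _ (E.map (SimplexCategory.δ q).op e)
      rw [← FunctorToTypes.map_comp_apply, ← op_comp, hspec]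
  · -- fac_right
    apply SSet.hom_ext
    intro l
    ext α
    show f.app _ (E.map ((SSet.stdSimplex.objEquiv (n := ⦋n+2⦌) (m := l)) α).op e) = v.app l α
    rw [eval v l α]
    have hef' : f.app (op ⦋n+2⦌) e = b := hef
    refine (types_congr_hom (f.naturality ((SSet.stdSimplex.objEquiv (n := ⦋n+2⦌) (m := l)) α).op) e).trans ?_
    show B.map ((SSet.stdSimplex.objEquiv (n := ⦋n+2⦌) (m := l)) α).op (f.app (op ⦋n+2⦌) e) = _
    rw [hef', hb]
end

section
/- For any simplicial set S, the conjunction of the Kan conditions Kan_p[n] over all n ≤ 2 (i.e., Kan_0[1], Kan_1[1], Kan_0[2], Kan_1[2], Kan_2[2]) is equivalent to the conjunction of the Beck–Chevalley conditions BC_{p,q}[n] over all n ≤ 2 (i.e., BC_{0,1}[2], BC_{0,2}[2], BC_{1,2}[2]). -/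
open CategoryTheory Simplicial

lemma kan1_always (S : SSet) (p : Fin 2) : KanCondition1 S p := by
  intro c
  fin_cases p
  · refine ⟨S.σ 0 (c 1 (by decide)), ?_⟩
    intro i hi
    fin_cases i
    · exact absurd rfl hi
    · simpa using ConcreteCategory.congr_hom (S.δ_comp_σ_succ (i := (0 : Fin 1))) (c 1 (by decide))
  · refine ⟨S.σ 0 (c 0 (by decide)), ?_⟩
    intro i hi
    fin_cases i
    · simpa using ConcreteCategory.congr_hom (S.δ_comp_σ_self (i := (0 : Fin 1))) (c 0 (by decide))
    · exact absurd rfl hi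

/-- For any simplicial set `S`, the conjunction of the Kan conditions in dimensions `n ≤ 2`
(namely `Kan_0[1]`, `Kan_1[1]`, `Kan_0[2]`, `Kan_1[2]`, `Kan_2[2]`) is equivalent to the
conjunction of the Beck-Chevalley conditions in dimensions `n ≤ 2`
(namely `BC_{0,1}[2]`, `BC_{0,2}[2]`, `BC_{1,2}[2]`). -/
theorem kanConditions_le_two_iff_bcConditions_le_two (S : SSet) :
    ((∀ p : Fin 2, KanCondition1 S p) ∧ (∀ p : Fin 3, KanCondition S 0 p)) ↔
      (∀ (p q : Fin 3) (hpq : p < q), BCCondition S 0 p q hpq) := by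
  constructor
  · rintro ⟨-, h2⟩ p q hpq cp cq hc
    fin_cases p <;> fin_cases q <;> first
      | exact absurd hpq (by decide)
      | skip
    · -- p=0, q=1, r=2
      refine (h2 2 (fun i _ => if i = 0 then cp else cq) ?_).elim
        (fun x hx => ⟨x, by simpa using hx 0 (by decide), by simpa using hx 1 (by decide)⟩)
      intro i j hij hi hj
      fin_cases i <;> fin_cases j <;>
        first
          | exact absurd hij (by decide)
          | exact (hi (by decide)).elim
          | exact (hj (by decide)).elim
          | simpa using hc
    · -- p=0, q=2, r=1
      refine (h2 1 (fun i _ => if i = 0 then cp else cq) ?_).elim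
        (fun x hx => ⟨x, by simpa using hx 0 (by decide), by simpa using hx 2 (by decide)⟩)
      intro i j hij hi hj
      fin_cases i <;> fin_cases j <;>
        first
          | exact absurd hij (by decide)
          | exact (hi (by decide)).elim
          | exact (hj (by decide)).elim
          | simpa using hc
    · -- p=1, q=2, r=0
      refine (h2 0 (fun i _ => if i = 1 then cp else cq) ?_).elim
        (fun x hx => ⟨x, by simpa using hx 1 (by decide), by simpa using hx 2 (by decide)⟩)
      intro i j hij hi hj
      fin_cases i <;> fin_cases j <;>
        first
          | exact absurd hij (by decide)
          | exact (hi (by decide)).elim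
          | exact (hj (by decide)).elim
          | simpa using hc
  · intro hbc
    refine ⟨kan1_always S, ?_⟩
    intro p c hcomp
    fin_cases p
    · obtain ⟨x, h1, h2⟩ := hbc 1 2 (by decide) (c 1 (by decide)) (c 2 (by decide))
        (hcomp 1 2 (by decide) (by decide) (by decide))
      refine ⟨x, ?_⟩
      intro i hi
      fin_cases i
      · exact absurd rfl hi
      · exact h1
      · exact h2
    · obtain ⟨x, h1, h2⟩ := hbc 0 2 (by decide) (c 0 (by decide)) (c 2 (by decide))
        (hcomp 0 2 (by decide) (by decide) (by decide))
      refine ⟨x, ?_⟩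
      intro i hi
      fin_cases i
      · exact h1
      · exact absurd rfl hi
      · exact h2
    · obtain ⟨x, h1, h2⟩ := hbc 0 1 (by decide) (c 0 (by decide)) (c 1 (by decide))
        (hcomp 0 1 (by decide) (by decide) (by decide))
      refine ⟨x, ?_⟩
      intro i hi
      fin_cases i
      · exact h1
      · exact h2
      · exact absurd rfl hi
end

section
/- Let M be a commutative monoid and let n>1 and 0 ≤ p < q ≤ n. The simplicial set K(M,2) satisfies the Beck–Chevalley condition BC_{p,q}[n] if and only if: for any family of elements a_{ijk} ∈ M indexed by 0 ≤ i < j < k ≤ n with {p,q} ⊄ {i,j,k}, satisfying a_{ikl}·a_{ijk} = a_{ijl}·a_{jkl} for all 0 ≤ i < j < k < l ≤ n with {p,q} ⊄ {i,j,k,l}, there exist elements x_{ipq} (0 ≤ i < p), y_{pjq} (p < j < q), z_{pqk} (q < k ≤ n) of M satisfying: (1) x_{ipq}·a_{ijp} = a_{ijq}·x_{jpq} for all 0 ≤ i < j < p; (2) y_{pkq}·a_{pjk} = y_{pjq}·a_{jkq} for all p < j < k < q; (3) a_{pkl}·z_{pqk} = z_{pql}·a_{qkl} for all q < k < l ≤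 n; (4) x_{ipq}·y_{pjq} = a_{ijq}·a_{ipj} for all 0 ≤ i < p < j < q; (5) a_{iqk}·x_{ipq} = a_{ipk}·z_{pqk} for all 0 ≤ i < p < q < k ≤ n; (6) z_{pqk}·y_{pjq} = a_{pjk}·a_{jqk} for all p < j < q < k ≤ n. -/
open CategoryTheory Simplicial

open CategoryTheory Simplicial

/-- The 2-cocycle condition for a family `a = (a_{ijk})_{i<j<k}` of elements of a commutative
monoid `M`. -/
def IsCocycle (M : Type) [CommMonoid M] {n : ℕ}
    (a : (i j k : Fin (n + 1)) → i < j → j < k → M) : Prop :=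
  ∀ (i j k l : Fin (n + 1)) (hij : i < j) (hjk : j < k) (hkl : k < l),
    a i k l (hij.trans hjk) hkl * a i j k hij hjk =
      a i j l hij (hjk.trans hkl) * a j k l hjk hkl

/-- Pullback of a family of elements of `M` along a morphism of the simplex category:
`(f^* a)_{ijk} = a_{f(i) f(j) f(k)}` when `f(i) < f(j) < f(k)`, and `1` otherwise. -/
def pullFamily (M : Type) [CommMonoid M] {m n : SimplexCategory} (f : m ⟶ n)
    (a : (i j k : Fin (n.len + 1)) → i < j → j < k → M)
    (i j k : Fin (m.len + 1)) (_ : i < j) (_ : j < k) : M :=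
  if h : f.toOrderHom i < f.toOrderHom j ∧ f.toOrderHom j < f.toOrderHom k
  then a (f.toOrderHom i) (f.toOrderHom j) (f.toOrderHom k) h.1 h.2 else 1

lemma family_congr (M : Type) [CommMonoid M] {n : ℕ}
    (a : (i j k : Fin (n + 1)) → i < j → j < k → M)
    {i i' j j' k k' : Fin (n + 1)} (hi : i = i') (hj : j = j') (hk : k = k')
    {hij hjk hij' hjk'} : a i j k hij hjk = a i' j' k' hij' hjk' := by
  subst hi; subst hj; subst hk; rfl

lemma pullFamily_isCocycle (M : Type) [CommMonoid M] {m n : SimplexCategory} (f : m ⟶ n)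
    (a : (i j k : Fin (n.len + 1)) → i < j → j < k → M) (ha : IsCocycle M a) :
    IsCocycle M (pullFamily M f a) := by
  intro i j k l hij hjk hkl
  have h1 : f.toOrderHom i ≤ f.toOrderHom j := f.toOrderHom.monotone hij.le
  have h2 : f.toOrderHom j ≤ f.toOrderHom k := f.toOrderHom.monotone hjk.le
  have h3 : f.toOrderHom k ≤ f.toOrderHom l := f.toOrderHom.monotone hkl.le
  unfold pullFamily
  split_ifs <;> first | omega | skip
  all_goals try simp only [one_mul, mul_one]
  all_goals
    first
      | rfl
      | (exact ha _ _ _ _ _ _ _)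
      | (exact family_congr M a (by omega) (by omega) (by omega))

/-- The simplicial set `K(M,2)` associated to a commutative monoid `M`: its `n`-simplices are
families `(a_{ijk})_{0 ≤ i < j < k ≤ n}` of elements of `M` satisfying the cocycle condition
`a_{ikl} * a_{ijk} = a_{ijl} * a_{jkl}`. -/
def K2 (M : Type) [CommMonoid M] : SSet.{0} where
  obj n := { a : (i j k : Fin (n.unop.len + 1)) → i < j → j < k → M // IsCocycle M a }
  map {n₁ n₂} f := TypeCat.ofHom fun a => ⟨pullFamily M f.unop a.1, pullFamily_isCocycle M f.unop a.1 a.2⟩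
  map_id n := by
    ext a i j k hij hjk
    show pullFamily M (𝟙 n.unop) a.1 i j k hij hjk = a.1 i j k hij hjk
    unfold pullFamily
    rw [dif_pos ⟨hij, hjk⟩]
    exact family_congr M a.1 rfl rfl rfl
  map_comp {n₁ n₂ n₃} f g := by
    ext a i j k hij hjk
    show pullFamily M (g.unop ≫ f.unop) a.1 i j k hij hjk =
      pullFamily M g.unop (pullFamily M f.unop a.1) i j k hij hjk
    have m1 : g.unop.toOrderHom i ≤ g.unop.toOrderHom j := g.unop.toOrderHom.monotone hij.le
    have m2 : g.unop.toOrderHom j ≤ g.unop.toOrderHom k := g.unop.toOrderHom.monotone hjk.le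
    unfold pullFamily
    simp only [show ∀ x, (g.unop ≫ f.unop).toOrderHom x
        = f.unop.toOrderHom (g.unop.toOrderHom x) from fun _ => rfl]
    rcases lt_or_eq_of_le m1 with s1 | s1 <;> rcases lt_or_eq_of_le m2 with s2 | s2
    · split_ifs <;> first | rfl | omega
    · have e2 : f.unop.toOrderHom (g.unop.toOrderHom j) = f.unop.toOrderHom (g.unop.toOrderHom k) :=
        congrArg _ s2
      split_ifs <;> first | rfl | omega
    · have e1 : f.unop.toOrderHom (g.unop.toOrderHom i) = f.unop.toOrderHom (g.unop.toOrderHom j) :=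
        congrArg _ s1
      split_ifs <;> first | rfl | omega
    · have e1 : f.unop.toOrderHom (g.unop.toOrderHom i) = f.unop.toOrderHom (g.unop.toOrderHom j) :=
        congrArg _ s1
      have e2 : f.unop.toOrderHom (g.unop.toOrderHom j) = f.unop.toOrderHom (g.unop.toOrderHom k) :=
        congrArg _ s2
      split_ifs <;> first | rfl | omega

/-- The condition `{p,q} ⊄ {i,j,k}`. -/
def NotBothMem3 {N : ℕ} (p q i j k : Fin N) : Prop :=
  ¬((p = i ∨ p = j ∨ p = k) ∧ (q = i ∨ q = j ∨ q = k))

/-- The condition `{p,q} ⊄ {i,j,k,l}`. -/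
def NotBothMem4 {N : ℕ} (p q i j k l : Fin N) : Prop :=
  ¬((p = i ∨ p = j ∨ p = k ∨ p = l) ∧ (q = i ∨ q = j ∨ q = k ∨ q = l))
open CategoryTheory Simplicial

def up {n : ℕ} (t : Fin (n + 2)) (i : Fin (n + 1)) : Fin (n + 2) :=
  ⟨if i.1 < t.1 then i.1 else i.1 + 1, by have := i.2; have := t.2; split <;> omega⟩

def down {n : ℕ} (t i : Fin (n + 2)) : Fin (n + 1) :=
  ⟨if i.1 < t.1 then i.1 else i.1 - 1, by have := i.2; have := t.2; split <;> omega⟩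

lemma up_val {n : ℕ} (t : Fin (n + 2)) (i : Fin (n + 1)) :
    (up t i).1 = if i.1 < t.1 then i.1 else i.1 + 1 := rfl

lemma down_val {n : ℕ} (t i : Fin (n + 2)) :
    (down t i).1 = if i.1 < t.1 then i.1 else i.1 - 1 := rfl

lemma up_lt {n : ℕ} (t : Fin (n + 2)) {i j : Fin (n + 1)} (h : i < j) : up t i < up t j := by
  simp only [Fin.lt_def, up_val] at *
  split_ifs <;> omega

lemma up_ne {n : ℕ} (t : Fin (n + 2)) (i : Fin (n + 1)) : up t i ≠ t := by
  simp only [Ne, Fin.ext_iff, up_val]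
  split_ifs <;> omega

lemma down_lt {n : ℕ} (t : Fin (n + 2)) {i j : Fin (n + 2)} (hi : t ≠ i) (hj : t ≠ j)
    (h : i < j) : down t i < down t j := by
  simp only [Fin.lt_def, down_val] at *
  simp only [Ne, Fin.ext_iff] at hi hj
  split_ifs <;> omega

lemma up_down {n : ℕ} (t : Fin (n + 2)) {i : Fin (n + 2)} (h : t ≠ i) : up t (down t i) = i := by
  apply Fin.ext
  simp only [Ne, Fin.ext_iff] at h
  rw [up_val, down_val]
  split_ifs <;> omega

lemma down_up {n : ℕ} (t : Fin (n + 2)) (i : Fin (n + 1)) : down t (up t i) = i := by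
  apply Fin.ext
  have := i.2
  rw [down_val, up_val]
  split_ifs <;> omega

lemma succAbove_eq_up {n : ℕ} (t : Fin (n + 2)) (i : Fin (n + 1)) : t.succAbove i = up t i := by
  apply Fin.ext
  rw [Fin.succAbove, up_val]
  rcases Nat.lt_or_ge i.1 t.1 with h | h
  · rw [if_pos (by simpa [Fin.lt_def] using h), if_pos h]; rfl
  · rw [if_neg (by simpa [Fin.lt_def, Nat.not_lt] using h), if_neg (Nat.not_lt.2 h)]; rfl

lemma delta_toOrderHom {n : ℕ} (t : Fin (n + 2)) (i : Fin (n + 1)) :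
    (SimplexCategory.δ t).toOrderHom i = up t i := succAbove_eq_up t i

def dd {n : ℕ} (p q : Fin (n + 3)) (hpq : p < q) (i : Fin (n + 3)) : Fin (n + 1) :=
  ⟨if i.1 < p.1 then i.1 else if i.1 < q.1 then i.1 - 1 else i.1 - 2, by
    have := i.2; have := q.2; have : p.1 < q.1 := hpq; split_ifs <;> omega⟩

lemma dd_val {n : ℕ} (p q : Fin (n + 3)) (hpq : p < q) (i : Fin (n + 3)) :
    (dd p q hpq i).1 = if i.1 < p.1 then i.1 else if i.1 < q.1 then i.1 - 1 else i.1 - 2 := rfl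

lemma dd_lt {n : ℕ} (p q : Fin (n + 3)) (hpq : p < q) {i j : Fin (n + 3)}
    (hpi : p ≠ i) (hqi : q ≠ i) (hpj : p ≠ j) (hqj : q ≠ j) (h : i < j) :
    dd p q hpq i < dd p q hpq j := by
  simp only [Fin.lt_def, dd_val] at *
  simp only [Ne, Fin.ext_iff] at hpi hqi hpj hqj
  split_ifs <;> omega
lemma K2_δ_apply (M : Type) [CommMonoid M] {n : ℕ} (t : Fin (n + 2)) (x : (K2 M) _⦋n + 1⦌)
    (i j k : Fin (n + 1)) (hij : i < j) (hjk : j < k) :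
    ((K2 M).δ t x).1 i j k hij hjk =
      x.1 (up t i) (up t j) (up t k) (up_lt t hij) (up_lt t hjk) := by
  show pullFamily M (SimplexCategory.δ t) x.1 i j k hij hjk = _
  unfold pullFamily
  have hcond : (SimplexCategory.δ t).toOrderHom i < (SimplexCategory.δ t).toOrderHom j ∧
      (SimplexCategory.δ t).toOrderHom j < (SimplexCategory.δ t).toOrderHom k := by
    rw [delta_toOrderHom, delta_toOrderHom, delta_toOrderHom]
    exact ⟨up_lt t hij, up_lt t hjk⟩
  rw [dif_pos hcond]
  exact family_congr M x.1 (delta_toOrderHom t i) (delta_toOrderHom t j) (delta_toOrderHom t k)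

lemma pcongr {M : Type} [CommMonoid M] {n : ℕ} {p q : Fin (n + 1)}
    (a : (i j k : Fin (n + 1)) → i < j → j < k → NotBothMem3 p q i j k → M)
    {i i' j j' k k' : Fin (n + 1)} (hi : i = i') (hj : j = j') (hk : k = k')
    {hij hjk h3 hij' hjk' h3'} : a i j k hij hjk h3 = a i' j' k' hij' hjk' h3' := by
  subst hi; subst hj; subst hk; rfl

lemma notmem3_up_left {n : ℕ} (p q : Fin (n + 3)) (i j k : Fin (n + 2)) :
    NotBothMem3 p q (up p i) (up p j) (up p k) := fun h => by
  rcases h.1 with h' | h' | h' <;> exact up_ne p _ h'.symm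

lemma notmem3_up_right {n : ℕ} (p q : Fin (n + 3)) (i j k : Fin (n + 2)) :
    NotBothMem3 p q (up q i) (up q j) (up q k) := fun h => by
  rcases h.2 with h' | h' | h' <;> exact up_ne q _ h'.symm

lemma notmem4_up_left {n : ℕ} (p q : Fin (n + 3)) (i j k l : Fin (n + 2)) :
    NotBothMem4 p q (up p i) (up p j) (up p k) (up p l) := fun h => by
  rcases h.1 with h' | h' | h' | h' <;> exact up_ne p _ h'.symm

lemma notmem4_up_right {n : ℕ} (p q : Fin (n + 3)) (i j k l : Fin (n + 2)) :
    NotBothMem4 p q (up q i) (up q j) (up q k) (up q l) := fun h => by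
  rcases h.2 with h' | h' | h' | h' <;> exact up_ne q _ h'.symm

set_option maxHeartbeats 2000000 in

/-- For a commutative monoid `M`, `n > 1` and `0 ≤ p < q ≤ n`, the simplicial set `K(M,2)`
satisfies the Beck-Chevalley condition `BC_{p,q}[n]` iff for every family `a_{ijk}` of elements
of `M`, indexed by `0 ≤ i < j < k ≤ n` with `{p,q} ⊄ {i,j,k}` and satisfying the cocycle
equations for all `0 ≤ i < j < k < l ≤ n` with `{p,q} ⊄ {i,j,k,l}`, there exist elements
`x_{ipq}` (`i < p`), `y_{pjq}` (`p < j < q`), `z_{pqk}` (`q < k`) of `M` satisfying the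
equations (1)-(6). -/
theorem k2_bcCondition_iff (M : Type) [CommMonoid M] (m : ℕ) (p q : Fin (m + 3))
    (hpq : p < q) :
    BCCondition (K2 M) m p q hpq ↔
      ∀ a : (i j k : Fin (m + 3)) → i < j → j < k → NotBothMem3 p q i j k → M,
        (∀ (i j k l : Fin (m + 3)) (hij : i < j) (hjk : j < k) (hkl : k < l)
          (h4 : NotBothMem4 p q i j k l),
          a i k l (hij.trans hjk) hkl
              (by unfold NotBothMem4 at h4; unfold NotBothMem3; omega) *
            a i j k hij hjk (by unfold NotBothMem4 at h4; unfold NotBothMem3; omega) =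
          a i j l hij (hjk.trans hkl)
              (by unfold NotBothMem4 at h4; unfold NotBothMem3; omega) *
            a j k l hjk hkl (by unfold NotBothMem4 at h4; unfold NotBothMem3; omega)) →
        ∃ (x : (i : Fin (m + 3)) → i < p → M)
          (y : (j : Fin (m + 3)) → p < j → j < q → M)
          (z : (k : Fin (m + 3)) → q < k → M),
          (∀ (i j : Fin (m + 3)) (hij : i < j) (hjp : j < p),
            x i (hij.trans hjp) * a i j p hij hjp (by unfold NotBothMem3; omega) =
              a i j q hij (hjp.trans hpq) (by unfold NotBothMem3; omega) * x j hjp) ∧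
          (∀ (j k : Fin (m + 3)) (hpj : p < j) (hjk : j < k) (hkq : k < q),
            y k (hpj.trans hjk) hkq * a p j k hpj hjk (by unfold NotBothMem3; omega) =
              y j hpj (hjk.trans hkq) * a j k q hjk hkq (by unfold NotBothMem3; omega)) ∧
          (∀ (k l : Fin (m + 3)) (hqk : q < k) (hkl : k < l),
            a p k l (hpq.trans hqk) hkl (by unfold NotBothMem3; omega) * z k hqk =
              z l (hqk.trans hkl) * a q k l hqk hkl (by unfold NotBothMem3; omega)) ∧
          (∀ (i j : Fin (m + 3)) (hip : i < p) (hpj : p < j) (hjq : j < q),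
            x i hip * y j hpj hjq =
              a i j q (hip.trans hpj) hjq (by unfold NotBothMem3; omega) *
                a i p j hip hpj (by unfold NotBothMem3; omega)) ∧
          (∀ (i k : Fin (m + 3)) (hip : i < p) (hqk : q < k),
            a i q k (hip.trans hpq) hqk (by unfold NotBothMem3; omega) * x i hip =
              a i p k hip (hpq.trans hqk) (by unfold NotBothMem3; omega) * z k hqk) ∧
          (∀ (j k : Fin (m + 3)) (hpj : p < j) (hjq : j < q) (hqk : q < k),
            z k hqk * y j hpj hjq =
              a p j k hpj (hjq.trans hqk) (by unfold NotBothMem3; omega) *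
                a j q k hjq hqk (by unfold NotBothMem3; omega)) := by
  constructor
  · -- BC implies combinatorial condition
    intro hBC a hcoc
    obtain ⟨x, hxp, hxq⟩ := hBC
      ⟨fun i j k hij hjk =>
          a (up p i) (up p j) (up p k) (up_lt p hij) (up_lt p hjk) (notmem3_up_left p q i j k),
        fun i j k l hij hjk hkl =>
          hcoc _ _ _ _ (up_lt p hij) (up_lt p hjk) (up_lt p hkl) (notmem4_up_left p q i j k l)⟩
      ⟨fun i j k hij hjk =>
          a (up q i) (up q j) (up q k) (up_lt q hij) (up_lt q hjk) (notmem3_up_right p q i j k),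
        fun i j k l hij hjk hkl =>
          hcoc _ _ _ _ (up_lt q hij) (up_lt q hjk) (up_lt q hkl) (notmem4_up_right p q i j k l)⟩
      (by
        apply Subtype.ext
        funext i j k hij hjk
        refine (K2_δ_apply M _ _ i j k hij hjk).trans
          ((?_ : _ = _).trans (K2_δ_apply M _ _ i j k hij hjk).symm)
        exact pcongr a
          (by apply Fin.ext; have := i.2; have h1 : p.1 < q.1 := hpq; have := q.2
              simp only [up_val]; split_ifs <;> omega)
          (by apply Fin.ext; have := j.2; have h1 : p.1 < q.1 := hpq; have := q.2
              simp only [up_val]; split_ifs <;> omega)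
          (by apply Fin.ext; have := k.2; have h1 : p.1 < q.1 := hpq; have := q.2
              simp only [up_val]; split_ifs <;> omega))
    have hagree : ∀ (i j k : Fin (m + 3)) (hij : i < j) (hjk : j < k)
        (h3 : NotBothMem3 p q i j k), x.1 i j k hij hjk = a i j k hij hjk h3 := by
      intro i j k hij hjk h3
      by_cases hq : q ≠ i ∧ q ≠ j ∧ q ≠ k
      · have H := K2_δ_apply M q x (down q i) (down q j) (down q k)
          (down_lt q hq.1 hq.2.1 hij) (down_lt q hq.2.1 hq.2.2 hjk)
        rw [hxq] at H
        exact (family_congr M x.1 (up_down q hq.1).symm (up_down q hq.2.1).symm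
            (up_down q hq.2.2).symm).trans
          (H.symm.trans (pcongr a (up_down q hq.1) (up_down q hq.2.1) (up_down q hq.2.2)))
      · have hp : p ≠ i ∧ p ≠ j ∧ p ≠ k := by unfold NotBothMem3 at h3; tauto
        have H := K2_δ_apply M p x (down p i) (down p j) (down p k)
          (down_lt p hp.1 hp.2.1 hij) (down_lt p hp.2.1 hp.2.2 hjk)
        rw [hxp] at H
        exact (family_congr M x.1 (up_down p hp.1).symm (up_down p hp.2.1).symm
            (up_down p hp.2.2).symm).trans
          (H.symm.trans (pcongr a (up_down p hp.1) (up_down p hp.2.1) (up_down p hp.2.2)))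
    refine ⟨fun i hip => x.1 i p q hip hpq, fun j hpj hjq => x.1 p j q hpj hjq,
      fun k hqk => x.1 p q k hpq hqk, ?_, ?_, ?_, ?_, ?_, ?_⟩
    · intro i j hij hjp
      have H := x.2 i j p q hij hjp hpq
      rw [hagree i j p hij hjp (by unfold NotBothMem3; omega),
        hagree i j q hij (hjp.trans hpq) (by unfold NotBothMem3; omega)] at H
      exact H
    · intro j k hpj hjk hkq
      have H := x.2 p j k q hpj hjk hkq
      rw [hagree p j k hpj hjk (by unfold NotBothMem3; omega),
        hagree j k q hjk hkq (by unfold NotBothMem3; omega)] at H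
      exact H
    · intro k l hqk hkl
      have H := x.2 p q k l hpq hqk hkl
      rw [hagree p k l (hpq.trans hqk) hkl (by unfold NotBothMem3; omega),
        hagree q k l hqk hkl (by unfold NotBothMem3; omega)] at H
      exact H
    · intro i j hip hpj hjq
      have H := x.2 i p j q hip hpj hjq
      rw [hagree i j q (hip.trans hpj) hjq (by unfold NotBothMem3; omega),
        hagree i p j hip hpj (by unfold NotBothMem3; omega)] at H
      exact H.symm
    · intro i k hip hqk
      have H := x.2 i p q k hip hpq hqk
      rw [hagree i q k (hip.trans hpq) hqk (by unfold NotBothMem3; omega),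
        hagree i p k hip (hpq.trans hqk) (by unfold NotBothMem3; omega)] at H
      exact H
    · intro j k hpj hjq hqk
      have H := x.2 p j q k hpj hjq hqk
      rw [hagree p j k hpj (hjq.trans hqk) (by unfold NotBothMem3; omega),
        hagree j q k hjq hqk (by unfold NotBothMem3; omega)] at H
      exact H
  · -- combinatorial condition implies BC
    intro hcomb cp cq hcompat
    classical
    -- pointwise form of the compatibility
    have compat : ∀ (i j k : Fin (m + 3)) (hij : i < j) (hjk : j < k)
        (hp : p ≠ i ∧ p ≠ j ∧ p ≠ k) (hq : q ≠ i ∧ q ≠ j ∧ q ≠ k),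
        cq.1 (down q i) (down q j) (down q k)
            (down_lt q hq.1 hq.2.1 hij) (down_lt q hq.2.1 hq.2.2 hjk) =
          cp.1 (down p i) (down p j) (down p k)
            (down_lt p hp.1 hp.2.1 hij) (down_lt p hp.2.1 hp.2.2 hjk) := by
      intro i j k hij hjk hp hq
      have hij' : dd p q hpq i < dd p q hpq j := dd_lt p q hpq hp.1 hq.1 hp.2.1 hq.2.1 hij
      have hjk' : dd p q hpq j < dd p q hpq k := dd_lt p q hpq hp.2.1 hq.2.1 hp.2.2 hq.2.2 hjk
      have hpv : p.1 < q.1 := hpq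
      have hq2 := q.2
      have e : ∀ (w : Fin (m + 3)) (hpw : p ≠ w) (hqw : q ≠ w) (b1 : p.1 < m + 2)
          (b2 : q.1 - 1 < m + 2),
          up (⟨p.1, b1⟩ : Fin (m + 2)) (dd p q hpq w) = down q w ∧
          up (⟨q.1 - 1, b2⟩ : Fin (m + 2)) (dd p q hpq w) = down p w := by
        intro w hpw hqw b1 b2
        have hw := w.2
        have hpw' : p.1 ≠ w.1 := fun h => hpw (Fin.ext h)
        have hqw' : q.1 ≠ w.1 := fun h => hqw (Fin.ext h)
        constructor <;>
          (apply Fin.ext; simp only [up_val, down_val, dd_val]; split_ifs <;> omega)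
      have bp : p.1 < m + 2 := by omega
      have bq : q.1 - 1 < m + 2 := by omega
      have H := congrArg
        (fun s : (K2 M) _⦋m⦌ => s.1 (dd p q hpq i) (dd p q hpq j) (dd p q hpq k) hij' hjk')
        hcompat
      simp only at H
      rw [K2_δ_apply, K2_δ_apply] at H
      refine Eq.trans ?_ (Eq.trans H ?_)
      · exact family_congr M cq.1 ((e i hp.1 hq.1 bp bq).1).symm ((e j hp.2.1 hq.2.1 bp bq).1).symm
          ((e k hp.2.2 hq.2.2 bp bq).1).symm
      · exact family_congr M cp.1 ((e i hp.1 hq.1 bp bq).2) ((e j hp.2.1 hq.2.1 bp bq).2)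
          ((e k hp.2.2 hq.2.2 bp bq).2)
    -- the partial family determined by cp and cq
    set a : (i j k : Fin (m + 3)) → i < j → j < k → NotBothMem3 p q i j k → M :=
      fun i j k hij hjk h3 =>
        if hq : q ≠ i ∧ q ≠ j ∧ q ≠ k then
          cq.1 (down q i) (down q j) (down q k)
            (down_lt q hq.1 hq.2.1 hij) (down_lt q hq.2.1 hq.2.2 hjk)
        else
          have hp : p ≠ i ∧ p ≠ j ∧ p ≠ k := by unfold NotBothMem3 at h3; tauto
          cp.1 (down p i) (down p j) (down p k)
            (down_lt p hp.1 hp.2.1 hij) (down_lt p hp.2.1 hp.2.2 hjk)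
      with ha
    have haq : ∀ (i j k : Fin (m + 3)) (hij : i < j) (hjk : j < k)
        (h3 : NotBothMem3 p q i j k) (hq : q ≠ i ∧ q ≠ j ∧ q ≠ k),
        a i j k hij hjk h3 = cq.1 (down q i) (down q j) (down q k)
          (down_lt q hq.1 hq.2.1 hij) (down_lt q hq.2.1 hq.2.2 hjk) := by
      intro i j k hij hjk h3 hq
      simp only [ha]
      rw [dif_pos hq]
    have hap : ∀ (i j k : Fin (m + 3)) (hij : i < j) (hjk : j < k)
        (h3 : NotBothMem3 p q i j k) (hp : p ≠ i ∧ p ≠ j ∧ p ≠ k),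
        a i j k hij hjk h3 = cp.1 (down p i) (down p j) (down p k)
          (down_lt p hp.1 hp.2.1 hij) (down_lt p hp.2.1 hp.2.2 hjk) := by
      intro i j k hij hjk h3 hp
      simp only [ha]
      split_ifs with hq
      · exact compat i j k hij hjk hp hq
      · rfl
    -- the partial cocycle condition
    have hA : ∀ (i j k l : Fin (m + 3)) (hij : i < j) (hjk : j < k) (hkl : k < l)
        (h4 : NotBothMem4 p q i j k l),
        a i k l (hij.trans hjk) hkl
            (by unfold NotBothMem4 at h4; unfold NotBothMem3; omega) *
          a i j k hij hjk (by unfold NotBothMem4 at h4; unfold NotBothMem3; omega) =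
        a i j l hij (hjk.trans hkl)
            (by unfold NotBothMem4 at h4; unfold NotBothMem3; omega) *
          a j k l hjk hkl (by unfold NotBothMem4 at h4; unfold NotBothMem3; omega) := by
      intro i j k l hij hjk hkl h4
      by_cases hq4 : q ≠ i ∧ q ≠ j ∧ q ≠ k ∧ q ≠ l
      · rw [haq i k l (hij.trans hjk) hkl (by unfold NotBothMem3; omega)
            ⟨hq4.1, hq4.2.2.1, hq4.2.2.2⟩,
          haq i j k hij hjk (by unfold NotBothMem3; omega) ⟨hq4.1, hq4.2.1, hq4.2.2.1⟩,
          haq i j l hij (hjk.trans hkl) (by unfold NotBothMem3; omega)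
            ⟨hq4.1, hq4.2.1, hq4.2.2.2⟩,
          haq j k l hjk hkl (by unfold NotBothMem3; omega) ⟨hq4.2.1, hq4.2.2.1, hq4.2.2.2⟩]
        exact cq.2 (down q i) (down q j) (down q k) (down q l)
          (down_lt q hq4.1 hq4.2.1 hij) (down_lt q hq4.2.1 hq4.2.2.1 hjk)
          (down_lt q hq4.2.2.1 hq4.2.2.2 hkl)
      · have hp4 : p ≠ i ∧ p ≠ j ∧ p ≠ k ∧ p ≠ l := by unfold NotBothMem4 at h4; tauto
        rw [hap i k l (hij.trans hjk) hkl (by unfold NotBothMem3; omega)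
            ⟨hp4.1, hp4.2.2.1, hp4.2.2.2⟩,
          hap i j k hij hjk (by unfold NotBothMem3; omega) ⟨hp4.1, hp4.2.1, hp4.2.2.1⟩,
          hap i j l hij (hjk.trans hkl) (by unfold NotBothMem3; omega)
            ⟨hp4.1, hp4.2.1, hp4.2.2.2⟩,
          hap j k l hjk hkl (by unfold NotBothMem3; omega) ⟨hp4.2.1, hp4.2.2.1, hp4.2.2.2⟩]
        exact cp.2 (down p i) (down p j) (down p k) (down p l)
          (down_lt p hp4.1 hp4.2.1 hij) (down_lt p hp4.2.1 hp4.2.2.1 hjk)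
          (down_lt p hp4.2.2.1 hp4.2.2.2 hkl)
    obtain ⟨x, y, z, e1, e2, e3, e4, e5, e6⟩ := hcomb a hA
    have hb3 : ∀ (i j k : Fin (m + 3)), i < j → j < k → ¬NotBothMem3 p q i j k →
        (i < p ∧ j = p ∧ k = q) ∨ (i = p ∧ p < j ∧ j < q ∧ k = q) ∨
          (i = p ∧ j = q ∧ q < k) := by
      intro i j k hij hjk h3
      unfold NotBothMem3 at h3
      rw [not_not] at h3
      rcases h3 with ⟨hp | hp | hp, hq | hq | hq⟩
      · exfalso; omega
      · exact Or.inr (Or.inr ⟨hp.symm, hq.symm, by omega⟩)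
      · exact Or.inr (Or.inl ⟨hp.symm, by omega, by omega, hq.symm⟩)
      · exfalso; omega
      · exfalso; omega
      · exact Or.inl ⟨by omega, hp.symm, hq.symm⟩
      · exfalso; omega
      · exfalso; omega
      · exfalso; omega
    set b : (i j k : Fin (m + 3)) → i < j → j < k → M := fun i j k hij hjk =>
      if h3 : NotBothMem3 p q i j k then a i j k hij hjk h3
      else if hip : i < p then x i hip
      else if hjq : j < q then
        y j (by rcases hb3 i j k hij hjk h3 with h | h | h <;> omega) hjq
      else z k (by rcases hb3 i j k hij hjk h3 with h | h | h <;> omega)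
      with hb
    have hb_a : ∀ (i j k : Fin (m + 3)) (hij : i < j) (hjk : j < k)
        (h3 : NotBothMem3 p q i j k), b i j k hij hjk = a i j k hij hjk h3 := by
      intro i j k hij hjk h3
      simp only [hb]
      rw [dif_pos h3]
    have hb_x : ∀ (i : Fin (m + 3)) (h1 : i < p) (h2 : p < q), b i p q h1 h2 = x i h1 := by
      intro i h1 h2
      simp only [hb]
      rw [dif_neg (by unfold NotBothMem3; omega), dif_pos h1]
    have hb_y : ∀ (j : Fin (m + 3)) (h1 : p < j) (h2 : j < q), b p j q h1 h2 = y j h1 h2 := by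
      intro j h1 h2
      simp only [hb]
      rw [dif_neg (by unfold NotBothMem3; omega), dif_neg (lt_irrefl p), dif_pos h2]
    have hb_z : ∀ (k : Fin (m + 3)) (h1 : p < q) (h2 : q < k), b p q k h1 h2 = z k h2 := by
      intro k h1 h2
      simp only [hb]
      rw [dif_neg (by unfold NotBothMem3; omega), dif_neg (lt_irrefl p),
        dif_neg (lt_irrefl q)]
    have hbcoc : IsCocycle M b := by
      intro i j k l hij hjk hkl
      by_cases h4 : NotBothMem4 p q i j k l
      · rw [hb_a i k l (hij.trans hjk) hkl
            (by unfold NotBothMem4 at h4; unfold NotBothMem3; tauto),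
          hb_a i j k hij hjk (by unfold NotBothMem4 at h4; unfold NotBothMem3; tauto),
          hb_a i j l hij (hjk.trans hkl)
            (by unfold NotBothMem4 at h4; unfold NotBothMem3; tauto),
          hb_a j k l hjk hkl (by unfold NotBothMem4 at h4; unfold NotBothMem3; tauto)]
        exact hA i j k l hij hjk hkl h4
      · have hcase : (p = i ∧ q = j) ∨ (p = i ∧ q = k) ∨ (p = i ∧ q = l) ∨
            (p = j ∧ q = k) ∨ (p = j ∧ q = l) ∨ (p = k ∧ q = l) := by
          unfold NotBothMem4 at h4
          rw [not_not] at h4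
          rcases h4 with ⟨hp | hp | hp | hp, hq | hq | hq | hq⟩
          · exfalso; omega
          · exact Or.inl ⟨hp, hq⟩
          · exact Or.inr (Or.inl ⟨hp, hq⟩)
          · exact Or.inr (Or.inr (Or.inl ⟨hp, hq⟩))
          · exfalso; omega
          · exfalso; omega
          · exact Or.inr (Or.inr (Or.inr (Or.inl ⟨hp, hq⟩)))
          · exact Or.inr (Or.inr (Or.inr (Or.inr (Or.inl ⟨hp, hq⟩))))
          · exfalso; omega
          · exfalso; omega
          · exfalso; omega
          · exact Or.inr (Or.inr (Or.inr (Or.inr (Or.inr ⟨hp, hq⟩))))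
          · exfalso; omega
          · exfalso; omega
          · exfalso; omega
          · exfalso; omega
        rcases hcase with ⟨rfl, rfl⟩ | ⟨rfl, rfl⟩ | ⟨rfl, rfl⟩ | ⟨rfl, rfl⟩ | ⟨rfl, rfl⟩ |
          ⟨rfl, rfl⟩
        · -- (p,q) = (i,j) : quadruple (p,q,k,l)
          rw [hb_a p k l (hij.trans hjk) hkl (by unfold NotBothMem3; omega),
            hb_z k hij hjk, hb_z l hij (hjk.trans hkl),
            hb_a q k l hjk hkl (by unfold NotBothMem3; omega)]
          exact e3 k l hjk hkl
        · -- (p,q) = (i,k) : quadruple (p,j,q,l)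
          rw [hb_z l (hij.trans hjk) hkl, hb_y j hij hjk,
            hb_a p j l hij (hjk.trans hkl) (by unfold NotBothMem3; omega),
            hb_a j q l hjk hkl (by unfold NotBothMem3; omega)]
          exact e6 j l hij hjk hkl
        · -- (p,q) = (i,l) : quadruple (p,j,k,q)
          rw [hb_y k (hij.trans hjk) hkl,
            hb_a p j k hij hjk (by unfold NotBothMem3; omega),
            hb_y j hij (hjk.trans hkl),
            hb_a j k q hjk hkl (by unfold NotBothMem3; omega)]
          exact e2 j k hij hjk hkl
        · -- (p,q) = (j,k) : quadruple (i,p,q,l)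
          rw [hb_a i q l (hij.trans hjk) hkl (by unfold NotBothMem3; omega),
            hb_x i hij hjk,
            hb_a i p l hij (hjk.trans hkl) (by unfold NotBothMem3; omega),
            hb_z l hjk hkl]
          exact e5 i l hij hkl
        · -- (p,q) = (j,l) : quadruple (i,p,k,q)
          rw [hb_a i k q (hij.trans hjk) hkl (by unfold NotBothMem3; omega),
            hb_a i p k hij hjk (by unfold NotBothMem3; omega),
            hb_x i hij (hjk.trans hkl),
            hb_y k hjk hkl]
          exact (e4 i k hij hjk hkl).symm
        · -- (p,q) = (k,l) : quadruple (i,j,p,q)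
          rw [hb_x i (hij.trans hjk) hkl,
            hb_a i j p hij hjk (by unfold NotBothMem3; omega),
            hb_a i j q hij (hjk.trans hkl) (by unfold NotBothMem3; omega),
            hb_x j hjk hkl]
          exact e1 i j hij hjk
    refine ⟨⟨b, hbcoc⟩, ?_, ?_⟩
    · apply Subtype.ext
      funext i j k hij hjk
      refine (K2_δ_apply M p ⟨b, hbcoc⟩ i j k hij hjk).trans ?_
      show b (up p i) (up p j) (up p k) (up_lt p hij) (up_lt p hjk) = cp.1 i j k hij hjk
      refine (hb_a (up p i) (up p j) (up p k) (up_lt p hij) (up_lt p hjk)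
          (notmem3_up_left p q i j k)).trans
        ((hap (up p i) (up p j) (up p k) (up_lt p hij) (up_lt p hjk)
          (notmem3_up_left p q i j k)
          ⟨(up_ne p i).symm, (up_ne p j).symm, (up_ne p k).symm⟩).trans ?_)
      exact family_congr M cp.1 (down_up p i) (down_up p j) (down_up p k)
    · apply Subtype.ext
      funext i j k hij hjk
      refine (K2_δ_apply M q ⟨b, hbcoc⟩ i j k hij hjk).trans ?_
      show b (up q i) (up q j) (up q k) (up_lt q hij) (up_lt q hjk) = cq.1 i j k hij hjk
      refine (hb_a (up q i) (up q j) (up q k) (up_lt q hij) (up_lt q hjk)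
          (notmem3_up_right p q i j k)).trans
        ((haq (up q i) (up q j) (up q k) (up_lt q hij) (up_lt q hjk)
          (notmem3_up_right p q i j k)
          ⟨(up_ne q i).symm, (up_ne q j).symm, (up_ne q k).symm⟩).trans ?_)
      exact family_congr M cq.1 (down_up q i) (down_up q j) (down_up q k)
end

section
/- Fix n>1 and 0 ≤ p < q ≤ n. Let a_{ijk} ∈ ℕ (nonnegative integers) be given for all 0 ≤ i < j < k ≤ n with {p,q} ⊄ {i,j,k}, and suppose integers x_{ipq} (0 ≤ i < p), y_{pjq} (p < j < q), z_{pqk} (q < k ≤ n) in ℤ satisfy: (1) x_{ipq} + a_{ijp} = a_{ijq} + x_{jpq} for all 0 ≤ i < j < p; (2) y_{pkq} + a_{pjk} = y_{pjq} + a_{jkq} for all p < j < k < q; (3) a_{pkl} + z_{pqk} = z_{pql} + a_{qkl} for all q < k < l ≤ n; (4) x_{ipq} + y_{pjq} = a_{ijq} + a_{ipj} for all 0 ≤ i < p < j < q; (5) a_{iqk} + x_{ipq} = a_{ipk} + z_{pqk} for all 0 ≤ i < p < q < k ≤ n; (6) z_{pqk} + y_{pjq} = a_{pjk} + a_{jqk}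 for all p < j < q < k ≤ n. Then there exists A ∈ ℤ such that all of x_{ipq} + A, y_{pjq} − A, z_{pqk} + A are nonnegative, and these shifted values again satisfy equations (1)–(6). In particular, equations (1)–(6) then admit solutions in ℕ. -/
/-- Fix `n > 1` and `0 ≤ p < q ≤ n`. Given nonnegative integers `a_{ijk}` and integers
`x_i` (`i < p`), `y_j` (`p < j < q`), `z_k` (`q < k ≤ n`) satisfying equations (1)-(6), there
is an `A : ℤ` such that `x_i + A`, `y_j - A`, `z_k + A` are all nonnegative and again satisfy
equations (1)-(6). In particular, equations (1)-(6) admit solutions in `ℕ`. -/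
theorem exists_shift_nonneg_solution (n p q : ℕ) (hn : 1 < n) (hpq : p < q) (hqn : q ≤ n)
    (a : ℕ → ℕ → ℕ → ℕ) (x y z : ℕ → ℤ)
    (h1 : ∀ i j, i < j → j < p → x i + (a i j p : ℤ) = (a i j q : ℤ) + x j)
    (h2 : ∀ j k, p < j → j < k → k < q → y k + (a p j k : ℤ) = y j + (a j k q : ℤ))
    (h3 : ∀ k l, q < k → k < l → l ≤ n → (a p k l : ℤ) + z k = z l + (a q k l : ℤ))
    (h4 : ∀ i j, i < p → p < j → j < q → x i + y j = (a i j q : ℤ) + (a i p j : ℤ))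
    (h5 : ∀ i k, i < p → q < k → k ≤ n → (a i q k : ℤ) + x i = (a i p k : ℤ) + z k)
    (h6 : ∀ j k, p < j → j < q → q < k → k ≤ n →
      z k + y j = (a p j k : ℤ) + (a j q k : ℤ)) :
    (∃ A : ℤ,
      (∀ i, i < p → 0 ≤ x i + A) ∧
      (∀ j, p < j → j < q → 0 ≤ y j - A) ∧
      (∀ k, q < k → k ≤ n → 0 ≤ z k + A) ∧
      (∀ i j, i < j → j < p → (x i + A) + (a i j p : ℤ) = (a i j q : ℤ) + (x j + A)) ∧
      (∀ j k, p < j → j < k → k < q → (y k - A) + (a p j k : ℤ) = (y j - A) + (a j k q : ℤ)) ∧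
      (∀ k l, q < k → k < l → l ≤ n → (a p k l : ℤ) + (z k + A) = (z l + A) + (a q k l : ℤ)) ∧
      (∀ i j, i < p → p < j → j < q → (x i + A) + (y j - A) = (a i j q : ℤ) + (a i p j : ℤ)) ∧
      (∀ i k, i < p → q < k → k ≤ n →
        (a i q k : ℤ) + (x i + A) = (a i p k : ℤ) + (z k + A)) ∧
      (∀ j k, p < j → j < q → q < k → k ≤ n →
        (z k + A) + (y j - A) = (a p j k : ℤ) + (a j q k : ℤ))) ∧
    (∃ x' y' z' : ℕ → ℕ,
      (∀ i j, i < j → j < p → x' i + a i j p = a i j q + x' j) ∧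
      (∀ j k, p < j → j < k → k < q → y' k + a p j k = y' j + a j k q) ∧
      (∀ k l, q < k → k < l → l ≤ n → a p k l + z' k = z' l + a q k l) ∧
      (∀ i j, i < p → p < j → j < q → x' i + y' j = a i j q + a i p j) ∧
      (∀ i k, i < p → q < k → k ≤ n → a i q k + x' i = a i p k + z' k) ∧
      (∀ j k, p < j → j < q → q < k → k ≤ n → z' k + y' j = a p j k + a j q k)) := by
  classical
  set S : Finset ℤ := (Finset.range p).image (fun i => -x i) ∪
      (Finset.Icc (q+1) n).image (fun k => -z k) with hS
  set T : Finset ℤ := (Finset.Ioo p q).image y with hT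
  set A : ℤ := if hs : S.Nonempty then S.max' hs
      else if ht : T.Nonempty then T.min' ht else 0 with hA
  have hxmem : ∀ i, i < p → (-x i) ∈ S := by
    intro i hi
    simp only [hS, Finset.mem_union, Finset.mem_image, Finset.mem_range]
    exact Or.inl ⟨i, hi, rfl⟩
  have hzmem : ∀ k, q < k → k ≤ n → (-z k) ∈ S := by
    intro k hk hkn
    simp only [hS, Finset.mem_union, Finset.mem_image, Finset.mem_Icc]
    exact Or.inr ⟨k, ⟨hk, hkn⟩, rfl⟩
  have hSle : ∀ s ∈ S, s ≤ A := by
    intro s hs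
    have hne : S.Nonempty := ⟨s, hs⟩
    rw [hA, dif_pos hne]
    exact S.le_max' s hs
  have hyge : ∀ j, p < j → j < q → A ≤ y j := by
    intro j hj hjq
    by_cases hne : S.Nonempty
    · rw [hA, dif_pos hne]
      apply Finset.max'_le
      intro s hs
      simp only [hS, Finset.mem_union, Finset.mem_image, Finset.mem_range,
        Finset.mem_Icc] at hs
      rcases hs with ⟨i, hi, rfl⟩ | ⟨k, ⟨hk, hkn⟩, rfl⟩
      · have e := h4 i j hi hj hjq
        have h0 : (0:ℤ) ≤ x i + y j := by rw [e]; positivity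
        linarith
      · have := h6 j k hj hjq hk hkn
        have h0 : (0:ℤ) ≤ z k + y j := by
          rw [this]; positivity
        linarith
    · have htne : T.Nonempty := ⟨y j, by
        simp only [hT, Finset.mem_image, Finset.mem_Ioo]; exact ⟨j, ⟨hj, hjq⟩, rfl⟩⟩
      rw [hA, dif_neg hne, dif_pos htne]
      apply Finset.min'_le
      simp only [hT, Finset.mem_image, Finset.mem_Ioo]; exact ⟨j, ⟨hj, hjq⟩, rfl⟩
  have hx' : ∀ i, i < p → 0 ≤ x i + A := fun i hi => by
    have := hSle _ (hxmem i hi); linarith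
  have hy' : ∀ j, p < j → j < q → 0 ≤ y j - A := fun j hj hjq => by
    have := hyge j hj hjq; linarith
  have hz' : ∀ k, q < k → k ≤ n → 0 ≤ z k + A := fun k hk hkn => by
    have := hSle _ (hzmem k hk hkn); linarith
  refine ⟨⟨A, hx', hy', hz',
    fun i j hij hjp => by have := h1 i j hij hjp; linarith,
    fun j k hj hjk hkq => by have := h2 j k hj hjk hkq; linarith,
    fun k l hk hkl hln => by have := h3 k l hk hkl hln; linarith,
    fun i j hi hj hjq => by have := h4 i j hi hj hjq; linarith,
    fun i k hi hk hkn => by have := h5 i k hi hk hkn; linarith,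
    fun j k hj hjq hk hkn => by have := h6 j k hj hjq hk hkn; linarith⟩, ?_⟩
  refine ⟨fun i => (x i + A).toNat, fun j => (y j - A).toNat, fun k => (z k + A).toNat,
    ?_, ?_, ?_, ?_, ?_, ?_⟩
  · intro i j hij hjp
    have hi : i < p := hij.trans hjp
    have e1 := h1 i j hij hjp
    have := hx' i hi; have := hx' j hjp
    beta_reduce
    omega
  · intro j k hj hjk hkq
    have e := h2 j k hj hjk hkq
    have := hy' j hj (hjk.trans hkq); have := hy' k (hj.trans hjk) hkq
    beta_reduce
    omega
  · intro k l hk hkl hln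
    have e := h3 k l hk hkl hln
    have := hz' k hk (hkl.le.trans hln); have := hz' l (hk.trans hkl) hln
    beta_reduce
    omega
  · intro i j hi hj hjq
    have e := h4 i j hi hj hjq
    have := hx' i hi; have := hy' j hj hjq
    beta_reduce
    omega
  · intro i k hi hk hkn
    have e := h5 i k hi hk hkn
    have := hx' i hi; have := hz' k hk hkn
    beta_reduce
    omega
  · intro j k hj hjq hk hkn
    have e := h6 j k hj hjq hk hkn
    have := hy' j hj hjq; have := hz' k hk hkn
    beta_reduce
    omega
end
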